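/- arXiv:math/0308250 — 9 statements merged into one kernel-verified Lean document; each statement's English description precedes it below -/
import Mathlib

section
/- Let G be a countable discrete abelian group with dual Ĝ and Haar measure λ, let F ⊆ Ĝ be measurable, H = L²(F, λ|_F), and π the representation of G on H by multiplication by characters. If x and y are both frame vectors for π, then the frames {π(g)x} and {π(g)y} are similar: there exists a bounded invertible operator S : H → H commuting with all π(g) such that S(π(g)x) = π(g)y for all g ∈ G. Consequently the ranges of the analysis operators Θ_x and Θ_y in ℓ²(G) coincide. -/
open MeasureTheory ComplexConjugate

set_option linter.unusedSectionVars false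


section FrameAux

variable {G X : Type*} [Countable G] [MeasurableSpace X]
  {μ : Measure X} [IsProbabilityMeasure μ]

private lemma integrable_norm_sq {f : X → ℂ} (hf : MemLp f 2 μ) :
    Integrable (fun t => ‖f t‖ ^ 2) μ := by
  have h := hf.integrable_norm_rpow (by norm_num) (by norm_num)
  have h2 : (2 : ENNReal).toReal = ((2 : ℕ) : ℝ) := by norm_num
  rw [h2] at h
  simpa [Real.rpow_natCast] using h

private lemma aesm_conj {f : X → ℂ} (hf : AEStronglyMeasurable f μ) :
    AEStronglyMeasurable (fun t => conj (f t)) μ :=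
  RCLike.continuous_conj.comp_aestronglyMeasurable hf

private lemma parseval [DecidableEq G] (χ : G → X → ℂ) (hmeas : ∀ g, Measurable (χ g))
    (hunit : ∀ g t, ‖χ g t‖ = 1)
    (horth : ∀ g g' : G, ∫ t, χ g t * conj (χ g' t) ∂μ = if g = g' then (1 : ℂ) else 0)
    (hcomp : ∀ f : X → ℂ, MemLp f 2 μ →
      (∀ g : G, ∫ t, f t * conj (χ g t) ∂μ = 0) → f =ᵐ[μ] 0)
    (f : X → ℂ) (hf : MemLp f 2 μ) :
    HasSum (fun g => ‖∫ t, f t * conj (χ g t) ∂μ‖ ^ 2) (∫ t, ‖f t‖ ^ 2 ∂μ) := by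
  have hχmem : ∀ g, MemLp (χ g) 2 μ := fun g =>
    MemLp.of_bound (hmeas g).aestronglyMeasurable 1
      (Filter.Eventually.of_forall fun t => (hunit g t).le)
  set e : G → Lp ℂ 2 μ := fun g => ((hχmem g).toLp _) with he
  have hinner : ∀ (g : G) (F₀ : Lp ℂ 2 μ),
      (inner ℂ (e g) F₀ : ℂ) = ∫ t, (F₀ : X → ℂ) t * conj (χ g t) ∂μ := by
    intro g F₀
    rw [MeasureTheory.L2.inner_def]
    refine integral_congr_ae ?_
    filter_upwards [(hχmem g).coeFn_toLp] with t ht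
    rw [RCLike.inner_apply, he]
    simp only []
    rw [ht, mul_comm]
  have hon : Orthonormal ℂ e := by
    rw [orthonormal_iff_ite]
    intro g g'
    rw [hinner g (e g')]
    have h1 : ∫ t, (e g' : X → ℂ) t * conj (χ g t) ∂μ = ∫ t, χ g' t * conj (χ g t) ∂μ := by
      refine integral_congr_ae ?_
      filter_upwards [(hχmem g').coeFn_toLp] with t ht
      rw [ht]
    rw [h1, horth g' g]
    simp [eq_comm]
  have hbot : (Submodule.span ℂ (Set.range e))ᗮ = ⊥ := by
    rw [Submodule.eq_bot_iff]
    intro F₀ hF₀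
    have h0 : ∀ g : G, ∫ t, (F₀ : X → ℂ) t * conj (χ g t) ∂μ = 0 := by
      intro g
      rw [← hinner g F₀]
      exact (Submodule.mem_orthogonal _ _).1 hF₀ _
        (Submodule.subset_span (Set.mem_range_self g))
    exact Lp.eq_zero_iff_ae_eq_zero.2 (hcomp _ (Lp.memLp F₀) h0)
  set c : G → ℂ := fun g => ∫ t, f t * conj (χ g t) ∂μ with hc
  set F₀ := hf.toLp f with hF₀
  have hcF : ∀ g, (inner ℂ (e g) F₀ : ℂ) = c g := by
    intro g
    rw [hinner]
    refine integral_congr_ae ?_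
    filter_upwards [hf.coeFn_toLp] with t ht
    rw [ht]
  have hb := (HilbertBasis.mkOfOrthogonalEqBot hon hbot).hasSum_inner_mul_inner F₀ F₀
  have hbg : ∀ i : G, (HilbertBasis.mkOfOrthogonalEqBot hon hbot).repr.symm
      (@lp.single G (fun _ => ℂ) _ (fun a b => Classical.propDecidable (a = b)) 2 i 1) = e i :=
    fun i => congrFun (HilbertBasis.coe_mkOfOrthogonalEqBot hon hbot) i
  simp only [hbg, HilbertBasis.coe_mkOfOrthogonalEqBot] at hb
  have hterm : ∀ g : G, (inner ℂ F₀ (e g) : ℂ) * inner ℂ (e g) F₀ = ((‖c g‖ ^ 2 : ℝ) : ℂ) := by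
    intro g
    rw [← inner_conj_symm F₀ (e g), hcF, mul_comm, Complex.mul_conj]
    norm_cast
    rw [Complex.normSq_eq_norm_sq]
  have hsum : (inner ℂ F₀ F₀ : ℂ) = ((∫ t, ‖f t‖ ^ 2 ∂μ : ℝ) : ℂ) := by
    rw [MeasureTheory.L2.inner_def]
    have h1 : ∫ a, (inner ℂ ((F₀ : X → ℂ) a) ((F₀ : X → ℂ) a) : ℂ) ∂μ
        = ∫ t, ((‖f t‖ ^ 2 : ℝ) : ℂ) ∂μ := by
      refine integral_congr_ae ?_
      filter_upwards [hf.coeFn_toLp] with t ht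
      rw [RCLike.inner_apply, ht, Complex.mul_conj]
      norm_cast
      rw [Complex.normSq_eq_norm_sq]
    rw [h1]
    exact integral_ofReal
  rw [hsum] at hb
  simp only [hterm] at hb
  have hb3 := hb.mapL Complex.reCLM
  simpa only [Complex.reCLM_apply, Complex.ofReal_re] using hb3

private lemma essbound [DecidableEq G] (χ : G → X → ℂ)
    (hP : ∀ f : X → ℂ, MemLp f 2 μ →
      HasSum (fun g => ‖∫ t, f t * conj (χ g t) ∂μ‖ ^ 2) (∫ t, ‖f t‖ ^ 2 ∂μ))
    (F : Set X) (hF : MeasurableSet F) (x : X → ℂ) (hx : MemLp x 2 μ)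
    {C₁ C₂ : ℝ} (hC₁ : 0 < C₁)
    (hframe : ∀ h : X → ℂ, MemLp h 2 μ → (∀ᵐ t ∂μ, t ∉ F → h t = 0) →
        C₁ * ∫ t, ‖h t‖ ^ 2 ∂μ ≤ ∑' g : G, ‖∫ t, h t * conj (χ g t * x t) ∂μ‖ ^ 2 ∧
        ∑' g : G, ‖∫ t, h t * conj (χ g t * x t) ∂μ‖ ^ 2 ≤ C₂ * ∫ t, ‖h t‖ ^ 2 ∂μ) :
    ∀ᵐ t ∂μ, t ∈ F → C₁ ≤ ‖x t‖ ^ 2 ∧ ‖x t‖ ^ 2 ≤ C₂ := by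
  set x' := hx.1.mk x with hx'def
  have hx'm : Measurable x' := hx.1.measurable_mk
  have hxx' : x =ᵐ[μ] x' := hx.1.ae_eq_mk
  -- the key estimate for indicator functions
  have key : ∀ E : Set X, MeasurableSet E → E ⊆ F →
      C₁ * (μ E).toReal ≤ ∫ t in E, ‖x t‖ ^ 2 ∂μ ∧
      ∫ t in E, ‖x t‖ ^ 2 ∂μ ≤ C₂ * (μ E).toReal := by
    intro E hE hEF
    set h : X → ℂ := E.indicator (fun _ => (1 : ℂ)) with hdef
    have hh : MemLp h 2 μ := memLp_indicator_const 2 hE 1 (Or.inr (measure_ne_top μ E))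
    have hhs : ∀ᵐ t ∂μ, t ∉ F → h t = 0 :=
      Filter.Eventually.of_forall fun t ht =>
        Set.indicator_of_notMem (fun hmem => ht (hEF hmem)) _
    set f : X → ℂ := fun t => h t * conj (x t) with hfdef
    have hfb : ∀ t, ‖f t‖ ≤ ‖x t‖ := by
      intro t
      by_cases htE : t ∈ E
      · simp [hfdef, hdef, Set.indicator_of_mem htE, RCLike.norm_conj]
      · simp [hfdef, hdef, Set.indicator_of_notMem htE, norm_nonneg]
    have hfmem : MemLp f 2 μ :=
      MemLp.of_le hx (hh.1.mul (aesm_conj hx.1)) (Filter.Eventually.of_forall hfb)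
    have hcoef : ∀ g : G, ∫ t, h t * conj (χ g t * x t) ∂μ = ∫ t, f t * conj (χ g t) ∂μ := by
      intro g
      refine integral_congr_ae (Filter.Eventually.of_forall fun t => ?_)
      simp only [hfdef, map_mul]
      ring
    have hsum := (hP f hfmem).tsum_eq
    have hnorm2h : ∫ t, ‖h t‖ ^ 2 ∂μ = (μ E).toReal := by
      have h1 : (fun t => ‖h t‖ ^ 2) = E.indicator (fun _ => (1 : ℝ)) := by
        funext t
        by_cases htE : t ∈ E
        · simp [hdef, Set.indicator_of_mem htE]
        · simp [hdef, Set.indicator_of_notMem htE]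
      rw [h1, integral_indicator hE, setIntegral_const, smul_eq_mul, mul_one]
      rfl
    have hnorm2f : ∫ t, ‖f t‖ ^ 2 ∂μ = ∫ t in E, ‖x t‖ ^ 2 ∂μ := by
      have h1 : (fun t => ‖f t‖ ^ 2) = E.indicator (fun t => ‖x t‖ ^ 2) := by
        funext t
        by_cases htE : t ∈ E
        · simp [hfdef, hdef, Set.indicator_of_mem htE, RCLike.norm_conj, norm_mul]
        · simp [hfdef, hdef, Set.indicator_of_notMem htE]
      rw [h1, integral_indicator hE]
    obtain ⟨hl, hu⟩ := hframe h hh hhs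
    have hts : ∑' g : G, ‖∫ t, h t * conj (χ g t * x t) ∂μ‖ ^ 2 = ∫ t in E, ‖x t‖ ^ 2 ∂μ := by
      have : (fun g : G => ‖∫ t, h t * conj (χ g t * x t) ∂μ‖ ^ 2)
          = fun g : G => ‖∫ t, f t * conj (χ g t) ∂μ‖ ^ 2 := by
        funext g; rw [hcoef g]
      rw [this, hsum, hnorm2f]
    constructor
    · rw [← hnorm2h, ← hts]; exact hl
    · rw [← hnorm2h, ← hts]; exact hu
  have hxint : Integrable (fun t => ‖x t‖ ^ 2) μ := integrable_norm_sq hx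
  have upper : ∀ n : ℕ, μ (F ∩ {t | C₂ + 1 / (n + 1) ≤ ‖x' t‖ ^ 2}) = 0 := by
    intro n
    set ε : ℝ := 1 / (n + 1) with hε
    have hε0 : 0 < ε := by positivity
    set E := F ∩ {t | C₂ + ε ≤ ‖x' t‖ ^ 2} with hEdef
    have hE : MeasurableSet E :=
      hF.inter (measurableSet_le measurable_const ((hx'm.norm).pow_const 2))
    obtain ⟨-, hu⟩ := key E hE Set.inter_subset_left
    have hlow : (C₂ + ε) * (μ E).toReal ≤ ∫ t in E, ‖x t‖ ^ 2 ∂μ := by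
      have h1 : ∫ t in E, (C₂ + ε) ∂μ ≤ ∫ t in E, ‖x t‖ ^ 2 ∂μ := by
        refine setIntegral_mono_on_ae (integrableOn_const)
          hxint.integrableOn hE ?_
        filter_upwards [hxx'] with t ht htE
        rw [ht]
        exact htE.2
      rwa [setIntegral_const, smul_eq_mul, mul_comm] at h1
    have hr0 : (0:ℝ) ≤ (μ E).toReal := ENNReal.toReal_nonneg
    have hzero : (μ E).toReal = 0 := by nlinarith
    exact ((ENNReal.toReal_eq_zero_iff _).1 hzero).resolve_right (measure_ne_top μ E)
  have lower : ∀ n : ℕ, μ (F ∩ {t | ‖x' t‖ ^ 2 ≤ C₁ - 1 / (n + 1)}) = 0 := by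
    intro n
    set ε : ℝ := 1 / (n + 1) with hε
    have hε0 : 0 < ε := by positivity
    set E := F ∩ {t | ‖x' t‖ ^ 2 ≤ C₁ - ε} with hEdef
    have hE : MeasurableSet E :=
      hF.inter (measurableSet_le ((hx'm.norm).pow_const 2) measurable_const)
    obtain ⟨hl, -⟩ := key E hE Set.inter_subset_left
    have hup : ∫ t in E, ‖x t‖ ^ 2 ∂μ ≤ (C₁ - ε) * (μ E).toReal := by
      have h1 : ∫ t in E, ‖x t‖ ^ 2 ∂μ ≤ ∫ t in E, (C₁ - ε) ∂μ := by
        refine setIntegral_mono_on_ae hxint.integrableOn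
          (integrableOn_const) hE ?_
        filter_upwards [hxx'] with t ht htE
        rw [ht]
        exact htE.2
      rwa [setIntegral_const, smul_eq_mul, mul_comm] at h1
    have hr0 : (0:ℝ) ≤ (μ E).toReal := ENNReal.toReal_nonneg
    have hzero : (μ E).toReal = 0 := by nlinarith
    exact ((ENNReal.toReal_eq_zero_iff _).1 hzero).resolve_right (measure_ne_top μ E)
  have hU : μ (⋃ n : ℕ, F ∩ {t | C₂ + 1 / (n + 1) ≤ ‖x' t‖ ^ 2}) = 0 :=
    measure_iUnion_null upper
  have hL : μ (⋃ n : ℕ, F ∩ {t | ‖x' t‖ ^ 2 ≤ C₁ - 1 / (n + 1)}) = 0 :=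
    measure_iUnion_null lower
  filter_upwards [hxx', measure_eq_zero_iff_ae_notMem.1 hU, measure_eq_zero_iff_ae_notMem.1 hL]
    with t htx htU htL htF
  rw [htx]
  constructor
  · by_contra hcon
    push_neg at hcon
    obtain ⟨n, hn⟩ := exists_nat_one_div_lt (show (0:ℝ) < C₁ - ‖x' t‖ ^ 2 by linarith)
    exact htL (Set.mem_iUnion.2 ⟨n, htF, by simp only [Set.mem_setOf_eq]; linarith⟩)
  · by_contra hcon
    push_neg at hcon
    obtain ⟨n, hn⟩ := exists_nat_one_div_lt (show (0:ℝ) < ‖x' t‖ ^ 2 - C₂ by linarith)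
    exact htU (Set.mem_iUnion.2 ⟨n, htF, by simp only [Set.mem_setOf_eq]; linarith⟩)

open Classical in
private noncomputable def mulS (x y : X → ℂ) : X → ℂ :=
  fun t => if x t = 0 then 0 else y t / x t

private lemma mulS_aesm {x y : X → ℂ} (hx : AEStronglyMeasurable x μ)
    (hy : AEStronglyMeasurable y μ) : AEStronglyMeasurable (mulS x y) μ := by
  classical
  refine ⟨fun t => if hx.mk x t = 0 then 0 else hy.mk y t / hx.mk x t, ?_, ?_⟩
  · refine Measurable.stronglyMeasurable ?_
    refine Measurable.ite ?_ measurable_const (hy.measurable_mk.div hx.measurable_mk)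
    exact hx.measurable_mk (measurableSet_singleton 0)
  · filter_upwards [hx.ae_eq_mk, hy.ae_eq_mk] with t h1 h2
    simp only [mulS, ← h1, ← h2]

variable {F : Set X}

private lemma mulS_norm_le {x y : X → ℂ} {C₁ C₂ : ℝ} (hC₁ : 0 < C₁)
    (hbx : ∀ᵐ t ∂μ, t ∈ F → C₁ ≤ ‖x t‖ ^ 2) (hby : ∀ᵐ t ∂μ, t ∈ F → ‖y t‖ ^ 2 ≤ C₂) :
    ∀ᵐ t ∂μ, t ∈ F → ‖mulS x y t‖ ≤ Real.sqrt C₂ / Real.sqrt C₁ := by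
  filter_upwards [hbx, hby] with t h1 h2 htF
  have hx0 : x t ≠ 0 := by
    intro h
    have := h1 htF
    rw [h] at this
    simp only [norm_zero] at this
    nlinarith
  simp only [mulS, if_neg hx0, norm_div]
  have h1' : Real.sqrt C₁ ≤ ‖x t‖ := by
    rw [show ‖x t‖ = Real.sqrt (‖x t‖ ^ 2) from (Real.sqrt_sq (norm_nonneg _)).symm]
    exact Real.sqrt_le_sqrt (h1 htF)
  have h2' : ‖y t‖ ≤ Real.sqrt C₂ := by
    rw [show ‖y t‖ = Real.sqrt (‖y t‖ ^ 2) from (Real.sqrt_sq (norm_nonneg _)).symm]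
    exact Real.sqrt_le_sqrt (h2 htF)
  exact div_le_div₀ (Real.sqrt_nonneg _) h2' (Real.sqrt_pos.2 hC₁) h1'

private lemma ae_F_ne_zero {x : X → ℂ} {C₁ : ℝ} (hC₁ : 0 < C₁)
    (hbx : ∀ᵐ t ∂μ, t ∈ F → C₁ ≤ ‖x t‖ ^ 2) : ∀ᵐ t ∂μ, t ∈ F → x t ≠ 0 := by
  filter_upwards [hbx] with t h1 htF h0
  have := h1 htF
  rw [h0] at this
  simp only [norm_zero] at this
  nlinarith

private lemma mulS_spec {x y : X → ℂ} {C₁ : ℝ} (hC₁ : 0 < C₁)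
    (hbx : ∀ᵐ t ∂μ, t ∈ F → C₁ ≤ ‖x t‖ ^ 2) (hysupp : ∀ᵐ t ∂μ, t ∉ F → y t = 0) :
    (fun t => mulS x y t * x t) =ᵐ[μ] y := by
  filter_upwards [ae_F_ne_zero hC₁ hbx, hysupp] with t h1 h2
  by_cases hx0 : x t = 0
  · have htF : t ∉ F := fun hmem => h1 hmem hx0
    simp [mulS, hx0, h2 htF]
  · simp [mulS, hx0, div_mul_cancel₀ _ hx0]

private lemma memℒp_mul_of_bound {m h : X → ℂ} {K : ℝ} (hK : 0 ≤ K)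
    (hm : AEStronglyMeasurable m μ) (hmb : ∀ᵐ t ∂μ, t ∈ F → ‖m t‖ ≤ K)
    (hh : MemLp h 2 μ) (hhs : ∀ᵐ t ∂μ, t ∉ F → h t = 0) :
    MemLp (fun t => m t * h t) 2 μ := by
  refine MemLp.of_le (hh.const_mul (K : ℂ)) (hm.mul hh.1) ?_
  filter_upwards [hmb, hhs] with t h1 h2
  by_cases htF : t ∈ F
  · rw [norm_mul, norm_mul]
    have hKn : ‖(K : ℂ)‖ = K := by
      rw [Complex.norm_real, Real.norm_eq_abs, abs_of_nonneg hK]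
    rw [hKn]
    exact mul_le_mul_of_nonneg_right (h1 htF) (norm_nonneg _)
  · simp [h2 htF]

private lemma integral_sq_mul_le {m h : X → ℂ} {K : ℝ} (hK : 0 ≤ K)
    (hm : AEStronglyMeasurable m μ) (hmb : ∀ᵐ t ∂μ, t ∈ F → ‖m t‖ ≤ K)
    (hh : MemLp h 2 μ) (hhs : ∀ᵐ t ∂μ, t ∉ F → h t = 0) :
    ∫ t, ‖m t * h t‖ ^ 2 ∂μ ≤ K ^ 2 * ∫ t, ‖h t‖ ^ 2 ∂μ := by
  have hmem := memℒp_mul_of_bound hK hm hmb hh hhs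
  have h1 : ∫ t, ‖m t * h t‖ ^ 2 ∂μ ≤ ∫ t, K ^ 2 * ‖h t‖ ^ 2 ∂μ := by
    refine integral_mono_ae (integrable_norm_sq hmem)
      ((integrable_norm_sq hh).const_mul (K ^ 2)) ?_
    filter_upwards [hmb, hhs] with t hb hs
    by_cases htF : t ∈ F
    · rw [norm_mul, mul_pow]
      have := hb htF
      have h2 := norm_nonneg (m t)
      have h4 : ‖m t‖ ^ 2 ≤ K ^ 2 := by nlinarith
      exact mul_le_mul_of_nonneg_right h4 (sq_nonneg _)
    · simp [hs htF]
  rwa [integral_const_mul] at h1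

private lemma coeff_range_subset (χ : G → X → ℂ)
    {x y : X → ℂ} (hx : MemLp x 2 μ) (hy : MemLp y 2 μ)
    {C₁ C₂ : ℝ} (hC₁ : 0 < C₁)
    (hbx : ∀ᵐ t ∂μ, t ∈ F → C₁ ≤ ‖x t‖ ^ 2) (hby : ∀ᵐ t ∂μ, t ∈ F → ‖y t‖ ^ 2 ≤ C₂)
    (hysupp : ∀ᵐ t ∂μ, t ∉ F → y t = 0) :
    {a : G → ℂ | ∃ h : X → ℂ, MemLp h 2 μ ∧ (∀ᵐ t ∂μ, t ∉ F → h t = 0) ∧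
        a = fun g => ∫ t, h t * conj (χ g t * y t) ∂μ} ⊆
      {a : G → ℂ | ∃ h : X → ℂ, MemLp h 2 μ ∧ (∀ᵐ t ∂μ, t ∉ F → h t = 0) ∧
        a = fun g => ∫ t, h t * conj (χ g t * x t) ∂μ} := by
  rintro a ⟨h, hh, hhs, rfl⟩
  have hK : (0:ℝ) ≤ Real.sqrt C₂ / Real.sqrt C₁ := by positivity
  have hmb := mulS_norm_le (μ := μ) (F := F) hC₁ hbx hby
  have hmb' : ∀ᵐ t ∂μ, t ∈ F → ‖conj (mulS x y t)‖ ≤ Real.sqrt C₂ / Real.sqrt C₁ := by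
    filter_upwards [hmb] with t ht htF
    rw [RCLike.norm_conj]
    exact ht htF
  have hmem : MemLp (fun t => conj (mulS x y t) * h t) 2 μ :=
    memℒp_mul_of_bound hK (aesm_conj (mulS_aesm hx.1 hy.1)) hmb' hh hhs
  refine ⟨fun t => h t * conj (mulS x y t), hmem.ae_eq
    (Filter.Eventually.of_forall fun t => mul_comm _ _), ?_, ?_⟩
  · filter_upwards [hhs] with t ht htF
    rw [ht htF, zero_mul]
  · funext g
    refine integral_congr_ae ?_
    filter_upwards [mulS_spec (μ := μ) (F := F) hC₁ hbx hysupp, hhs] with t ht hts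
    have : χ g t * y t = mulS x y t * (χ g t * x t) := by
      rw [← ht]; ring
    rw [this, map_mul]
    ring

end FrameAux

/-- If `x` and `y` are both frame vectors for the representation of a countable
discrete abelian group `G` by multiplication by characters on `H = L²(F, λ|_F)`, then the
frames `{π(g)x}` and `{π(g)y}` are similar: there is a bounded invertible operator `S` on `H`
commuting with all the `π(g)` carrying `π(g)x` to `π(g)y`; consequently the ranges of the
analysis operators `Θ_x` and `Θ_y` in `ℓ²(G)` coincide. -/
theorem stmt1 {G X : Type*} [CommGroup G] [Countable G] [DecidableEq G] [MeasurableSpace X]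
    (μ : Measure X) [IsProbabilityMeasure μ]
    (χ : G → X → ℂ)
    (hmeas : ∀ g, Measurable (χ g))
    (hunit : ∀ g x, ‖χ g x‖ = 1)
    (hhom : ∀ g g' x, χ (g * g') x = χ g x * χ g' x)
    (horth : ∀ g g' : G, ∫ x, χ g x * conj (χ g' x) ∂μ = if g = g' then (1 : ℂ) else 0)
    (hcomp : ∀ f : X → ℂ, MemLp f 2 μ →
      (∀ g : G, ∫ x, f x * conj (χ g x) ∂μ = 0) → f =ᵐ[μ] 0)
    (F : Set X) (hF : MeasurableSet F)
    (x y : X → ℂ) (hx : MemLp x 2 μ) (hy : MemLp y 2 μ)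
    (hxsupp : ∀ᵐ t ∂μ, t ∉ F → x t = 0) (hysupp : ∀ᵐ t ∂μ, t ∉ F → y t = 0)
    (hxframe : ∃ C₁ C₂ : ℝ, 0 < C₁ ∧ C₁ ≤ C₂ ∧
      ∀ h : X → ℂ, MemLp h 2 μ → (∀ᵐ t ∂μ, t ∉ F → h t = 0) →
        C₁ * ∫ t, ‖h t‖ ^ 2 ∂μ ≤ ∑' g : G, ‖∫ t, h t * conj (χ g t * x t) ∂μ‖ ^ 2 ∧
        ∑' g : G, ‖∫ t, h t * conj (χ g t * x t) ∂μ‖ ^ 2 ≤ C₂ * ∫ t, ‖h t‖ ^ 2 ∂μ)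
    (hyframe : ∃ C₁ C₂ : ℝ, 0 < C₁ ∧ C₁ ≤ C₂ ∧
      ∀ h : X → ℂ, MemLp h 2 μ → (∀ᵐ t ∂μ, t ∉ F → h t = 0) →
        C₁ * ∫ t, ‖h t‖ ^ 2 ∂μ ≤ ∑' g : G, ‖∫ t, h t * conj (χ g t * y t) ∂μ‖ ^ 2 ∧
        ∑' g : G, ‖∫ t, h t * conj (χ g t * y t) ∂μ‖ ^ 2 ≤ C₂ * ∫ t, ‖h t‖ ^ 2 ∂μ) :
    (∃ S T : (X → ℂ) → (X → ℂ),
      -- S and T map H = L²(F) into itself and are linear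
      (∀ h : X → ℂ, MemLp h 2 μ → (∀ᵐ t ∂μ, t ∉ F → h t = 0) →
        MemLp (S h) 2 μ ∧ (∀ᵐ t ∂μ, t ∉ F → S h t = 0)) ∧
      (∀ h : X → ℂ, MemLp h 2 μ → (∀ᵐ t ∂μ, t ∉ F → h t = 0) →
        MemLp (T h) 2 μ ∧ (∀ᵐ t ∂μ, t ∉ F → T h t = 0)) ∧
      (∀ (c : ℂ) (h₁ h₂ : X → ℂ), MemLp h₁ 2 μ → MemLp h₂ 2 μ →
        (∀ᵐ t ∂μ, t ∉ F → h₁ t = 0) → (∀ᵐ t ∂μ, t ∉ F → h₂ t = 0) →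
        S (fun t => c * h₁ t + h₂ t) =ᵐ[μ] fun t => c * S h₁ t + S h₂ t) ∧
      -- S and T are bounded
      (∃ C : ℝ, 0 < C ∧ ∀ h : X → ℂ, MemLp h 2 μ → (∀ᵐ t ∂μ, t ∉ F → h t = 0) →
        (∫ t, ‖S h t‖ ^ 2 ∂μ) ≤ C * ∫ t, ‖h t‖ ^ 2 ∂μ) ∧
      (∃ C : ℝ, 0 < C ∧ ∀ h : X → ℂ, MemLp h 2 μ → (∀ᵐ t ∂μ, t ∉ F → h t = 0) →
        (∫ t, ‖T h t‖ ^ 2 ∂μ) ≤ C * ∫ t, ‖h t‖ ^ 2 ∂μ) ∧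
      -- T is an inverse of S, so S is invertible
      (∀ h : X → ℂ, MemLp h 2 μ → (∀ᵐ t ∂μ, t ∉ F → h t = 0) →
        T (S h) =ᵐ[μ] h ∧ S (T h) =ᵐ[μ] h) ∧
      -- S commutes with every π(g)
      (∀ (g : G) (h : X → ℂ), MemLp h 2 μ → (∀ᵐ t ∂μ, t ∉ F → h t = 0) →
        S (fun t => χ g t * h t) =ᵐ[μ] fun t => χ g t * S h t) ∧
      -- S carries the frame {π(g)x} to the frame {π(g)y}
      (∀ g : G, S (fun t => χ g t * x t) =ᵐ[μ] fun t => χ g t * y t))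
    ∧
    {a : G → ℂ | ∃ h : X → ℂ, MemLp h 2 μ ∧ (∀ᵐ t ∂μ, t ∉ F → h t = 0) ∧
        a = fun g => ∫ t, h t * conj (χ g t * x t) ∂μ} =
      {a : G → ℂ | ∃ h : X → ℂ, MemLp h 2 μ ∧ (∀ᵐ t ∂μ, t ∉ F → h t = 0) ∧
        a = fun g => ∫ t, h t * conj (χ g t * y t) ∂μ} := by
  classical
  obtain ⟨A₁, A₂, hA₁, hA₁₂, hxf⟩ := hxframe
  obtain ⟨B₁, B₂, hB₁, hB₁₂, hyf⟩ := hyframe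
  have hA₂ : 0 < A₂ := lt_of_lt_of_le hA₁ hA₁₂
  have hB₂ : 0 < B₂ := lt_of_lt_of_le hB₁ hB₁₂
  have hP : ∀ f : X → ℂ, MemLp f 2 μ →
      HasSum (fun g => ‖∫ t, f t * conj (χ g t) ∂μ‖ ^ 2) (∫ t, ‖f t‖ ^ 2 ∂μ) :=
    fun f hf => parseval χ hmeas hunit horth hcomp f hf
  have hbx := essbound χ hP F hF x hx hA₁ hxf
  have hby := essbound χ hP F hF y hy hB₁ hyf
  have hbxl : ∀ᵐ t ∂μ, t ∈ F → A₁ ≤ ‖x t‖ ^ 2 := by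
    filter_upwards [hbx] with t ht htF; exact (ht htF).1
  have hbxu : ∀ᵐ t ∂μ, t ∈ F → ‖x t‖ ^ 2 ≤ A₂ := by
    filter_upwards [hbx] with t ht htF; exact (ht htF).2
  have hbyl : ∀ᵐ t ∂μ, t ∈ F → B₁ ≤ ‖y t‖ ^ 2 := by
    filter_upwards [hby] with t ht htF; exact (ht htF).1
  have hbyu : ∀ᵐ t ∂μ, t ∈ F → ‖y t‖ ^ 2 ≤ B₂ := by
    filter_upwards [hby] with t ht htF; exact (ht htF).2
  constructor
  · have hKS : (0:ℝ) < Real.sqrt B₂ / Real.sqrt A₁ :=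
      div_pos (Real.sqrt_pos.2 hB₂) (Real.sqrt_pos.2 hA₁)
    have hKT : (0:ℝ) < Real.sqrt A₂ / Real.sqrt B₁ :=
      div_pos (Real.sqrt_pos.2 hA₂) (Real.sqrt_pos.2 hB₁)
    have hmS := mulS_norm_le (μ := μ) (F := F) hA₁ hbxl hbyu
    have hmT := mulS_norm_le (μ := μ) (F := F) hB₁ hbyl hbxu
    have hmSa : AEStronglyMeasurable (mulS x y) μ := mulS_aesm hx.1 hy.1
    have hmTa : AEStronglyMeasurable (mulS y x) μ := mulS_aesm hy.1 hx.1
    refine ⟨fun h t => mulS x y t * h t, fun h t => mulS y x t * h t,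
      ?_, ?_, ?_, ?_, ?_, ?_, ?_, ?_⟩
    · intro h hh hhs
      refine ⟨memℒp_mul_of_bound hKS.le hmSa hmS hh hhs, ?_⟩
      filter_upwards [hhs] with t ht htF
      rw [ht htF, mul_zero]
    · intro h hh hhs
      refine ⟨memℒp_mul_of_bound hKT.le hmTa hmT hh hhs, ?_⟩
      filter_upwards [hhs] with t ht htF
      rw [ht htF, mul_zero]
    · intro c h₁ h₂ _ _ _ _
      exact Filter.Eventually.of_forall fun t => by ring
    · exact ⟨(Real.sqrt B₂ / Real.sqrt A₁) ^ 2, pow_pos hKS 2,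
        fun h hh hhs => integral_sq_mul_le hKS.le hmSa hmS hh hhs⟩
    · exact ⟨(Real.sqrt A₂ / Real.sqrt B₁) ^ 2, pow_pos hKT 2,
        fun h hh hhs => integral_sq_mul_le hKT.le hmTa hmT hh hhs⟩
    · intro h hh hhs
      constructor
      · filter_upwards [ae_F_ne_zero hA₁ hbxl, ae_F_ne_zero hB₁ hbyl, hhs] with t h1 h2 h3
        by_cases htF : t ∈ F
        · have hx0 := h1 htF
          have hy0 := h2 htF
          show mulS y x t * (mulS x y t * h t) = h t
          simp only [mulS, if_neg hx0, if_neg hy0]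
          field_simp
        · show mulS y x t * (mulS x y t * h t) = h t
          rw [h3 htF]
          ring
      · filter_upwards [ae_F_ne_zero hA₁ hbxl, ae_F_ne_zero hB₁ hbyl, hhs] with t h1 h2 h3
        by_cases htF : t ∈ F
        · have hx0 := h1 htF
          have hy0 := h2 htF
          show mulS x y t * (mulS y x t * h t) = h t
          simp only [mulS, if_neg hx0, if_neg hy0]
          field_simp
        · show mulS x y t * (mulS y x t * h t) = h t
          rw [h3 htF]
          ring
    · intro g h _ _
      exact Filter.Eventually.of_forall fun t => by ring
    · intro g
      filter_upwards [mulS_spec (μ := μ) (F := F) hA₁ hbxl hysupp] with t ht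
      show mulS x y t * (χ g t * x t) = χ g t * y t
      rw [← ht]
      ring
  · exact Set.Subset.antisymm
      (coeff_range_subset χ hy hx hB₁ hbyl hbxu hxsupp)
      (coeff_range_subset χ hx hy hA₁ hbxl hbyu hysupp)
end

section
/- Let G be a countable discrete abelian group acting on H = L²(E, λ|_E) and on K = L²(F, λ|_F) by multiplication by characters, where E, F ⊆ Ĝ are measurable. Let v ∈ H and w ∈ K be frame vectors for the respective representations, with analysis operators Θ_v : H → ℓ²(G) and Θ_w : K → ℓ²(G). Then the ranges of Θ_v and Θ_w are orthogonal subspaces of ℓ²(G) if and only if λ(E ∩ F) = 0. -/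
open MeasureTheory ComplexConjugate

local notation "⟪" x ", " y "⟫" => @inner ℂ _ _ x y

lemma parseval_aux {G X : Type*} [Countable G] [DecidableEq G] [MeasurableSpace X]
    (μ : Measure X) [IsProbabilityMeasure μ]
    (χ : G → X → ℂ)
    (hmeas : ∀ g, Measurable (χ g))
    (hunit : ∀ g x, ‖χ g x‖ = 1)
    (horth : ∀ g g' : G, ∫ x, χ g x * conj (χ g' x) ∂μ = if g = g' then (1 : ℂ) else 0)
    (hcomp : ∀ f : X → ℂ, MemLp f 2 μ →
      (∀ g : G, ∫ x, f x * conj (χ g x) ∂μ = 0) → f =ᵐ[μ] 0)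
    (f₁ f₂ : X → ℂ) (h₁ : MemLp f₁ 2 μ) (h₂ : MemLp f₂ 2 μ) :
    ∑' g : G, (∫ t, f₁ t * conj (χ g t) ∂μ) * conj (∫ t, f₂ t * conj (χ g t) ∂μ)
      = ∫ t, f₁ t * conj (f₂ t) ∂μ := by
  have hχ : ∀ g, MemLp (χ g) 2 μ := fun g =>
    MemLp.of_bound (hmeas g).aestronglyMeasurable 1 (Filter.Eventually.of_forall fun x => (hunit g x).le)
  set e : G → Lp ℂ 2 μ := fun g => (hχ g).toLp (χ g) with he
  have key : ∀ (g : G) (f : X → ℂ) (hf : MemLp f 2 μ),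
      ⟪e g, hf.toLp f⟫ = ∫ t, f t * conj (χ g t) ∂μ := by
    intro g f hf
    rw [L2.inner_def]
    refine integral_congr_ae ?_
    filter_upwards [MemLp.coeFn_toLp (hχ g), MemLp.coeFn_toLp hf] with t h1 h2
    simp [RCLike.inner_apply, he, h1, h2, mul_comm]
  have hON : Orthonormal ℂ e := by
    rw [orthonormal_iff_ite]
    intro g g'
    rw [key g (χ g') (hχ g'), horth g' g]
    simp [eq_comm]
  have hsp : (Submodule.span ℂ (Set.range e))ᗮ = ⊥ := by
    rw [Submodule.eq_bot_iff]
    intro x hx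
    have hx' : ∀ g, ⟪e g, x⟫ = 0 := fun g =>
      Submodule.inner_right_of_mem_orthogonal (Submodule.subset_span (Set.mem_range_self g)) hx
    have hm : MemLp (x : X → ℂ) 2 μ := Lp.memLp x
    have h0 : (x : X → ℂ) =ᵐ[μ] 0 := by
      refine hcomp x hm fun g => ?_
      have := hx' g
      rwa [← Lp.toLp_coeFn x hm, key g x hm] at this
    exact (Lp.eq_zero_iff_ae_eq_zero).mpr h0
  set b := HilbertBasis.mkOfOrthogonalEqBot hON hsp with hb
  have coe_b : ⇑b = e := HilbertBasis.coe_mkOfOrthogonalEqBot _ _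
  have hps := b.tsum_inner_mul_inner (h₂.toLp f₂) (h₁.toLp f₁)
  calc ∑' g : G, (∫ t, f₁ t * conj (χ g t) ∂μ) * conj (∫ t, f₂ t * conj (χ g t) ∂μ)
      = ∑' g : G, ⟪h₂.toLp f₂, b g⟫ * ⟪b g, h₁.toLp f₁⟫ := by
        refine tsum_congr fun g => ?_
        have h1 : ⟪b g, h₁.toLp f₁⟫ = ∫ t, f₁ t * conj (χ g t) ∂μ := by
          rw [show b g = e g from congrFun coe_b g]; exact key g f₁ h₁
        have h2 : ⟪h₂.toLp f₂, b g⟫ = conj (∫ t, f₂ t * conj (χ g t) ∂μ) := by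
          rw [← inner_conj_symm, show b g = e g from congrFun coe_b g, key g f₂ h₂]
        rw [h1, h2]; ring
    _ = ⟪h₂.toLp f₂, h₁.toLp f₁⟫ := hps
    _ = ∫ t, f₁ t * conj (f₂ t) ∂μ := by
        rw [L2.inner_def]
        refine integral_congr_ae ?_
        filter_upwards [MemLp.coeFn_toLp h₁, MemLp.coeFn_toLp h₂] with t ha hb
        simp [RCLike.inner_apply, ha, hb, mul_comm]

/-- For frame vectors `v ∈ L²(E, λ|_E)` and `w ∈ L²(F, λ|_F)` for the
representations of `G` by multiplication by characters, the ranges of the analysis operators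
`Θ_v` and `Θ_w` are orthogonal subspaces of `ℓ²(G)` if and only if `λ(E ∩ F) = 0`. -/
theorem stmt2 {G X : Type*} [CommGroup G] [Countable G] [DecidableEq G] [MeasurableSpace X]
    (μ : Measure X) [IsProbabilityMeasure μ]
    (χ : G → X → ℂ)
    (hmeas : ∀ g, Measurable (χ g))
    (hunit : ∀ g x, ‖χ g x‖ = 1)
    (hhom : ∀ g g' x, χ (g * g') x = χ g x * χ g' x)
    (horth : ∀ g g' : G, ∫ x, χ g x * conj (χ g' x) ∂μ = if g = g' then (1 : ℂ) else 0)
    (hcomp : ∀ f : X → ℂ, MemLp f 2 μ →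
      (∀ g : G, ∫ x, f x * conj (χ g x) ∂μ = 0) → f =ᵐ[μ] 0)
    (E F : Set X) (hE : MeasurableSet E) (hF : MeasurableSet F)
    (v w : X → ℂ) (hv : MemLp v 2 μ) (hw : MemLp w 2 μ)
    (hvsupp : ∀ᵐ t ∂μ, t ∉ E → v t = 0) (hwsupp : ∀ᵐ t ∂μ, t ∉ F → w t = 0)
    -- v and w are frame vectors: |v|², |w|² bounded above and below a.e. on E, F
    (hvframe : ∃ C₁ C₂ : ℝ, 0 < C₁ ∧ C₁ ≤ C₂ ∧
      ∀ᵐ t ∂(μ.restrict E), C₁ ≤ ‖v t‖ ^ 2 ∧ ‖v t‖ ^ 2 ≤ C₂)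
    (hwframe : ∃ C₁ C₂ : ℝ, 0 < C₁ ∧ C₁ ≤ C₂ ∧
      ∀ᵐ t ∂(μ.restrict F), C₁ ≤ ‖w t‖ ^ 2 ∧ ‖w t‖ ^ 2 ≤ C₂) :
    (∀ a ∈ {a : G → ℂ | ∃ h : X → ℂ, MemLp h 2 μ ∧ (∀ᵐ t ∂μ, t ∉ E → h t = 0) ∧
        a = fun g => ∫ t, h t * conj (χ g t * v t) ∂μ},
     ∀ b ∈ {b : G → ℂ | ∃ h : X → ℂ, MemLp h 2 μ ∧ (∀ᵐ t ∂μ, t ∉ F → h t = 0) ∧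
        b = fun g => ∫ t, h t * conj (χ g t * w t) ∂μ},
      ∑' g : G, a g * conj (b g) = 0)
    ↔ μ (E ∩ F) = 0 := by
  obtain ⟨C₁, C₂, hC₁, hC₁₂, hvf⟩ := hvframe
  obtain ⟨D₁, D₂, hD₁, hD₁₂, hwf⟩ := hwframe
  have hvf' : ∀ᵐ t ∂μ, t ∈ E → (C₁ ≤ ‖v t‖ ^ 2 ∧ ‖v t‖ ^ 2 ≤ C₂) := (ae_restrict_iff' hE).mp hvf
  have hwf' : ∀ᵐ t ∂μ, t ∈ F → (D₁ ≤ ‖w t‖ ^ 2 ∧ ‖w t‖ ^ 2 ≤ D₂) := (ae_restrict_iff' hF).mp hwf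
  have hvb : ∀ᵐ t ∂μ, ‖v t‖ ^ 2 ≤ C₂ := by
    filter_upwards [hvf', hvsupp] with t h1 h2
    by_cases ht : t ∈ E
    · exact (h1 ht).2
    · simp [h2 ht]; linarith
  have hwb : ∀ᵐ t ∂μ, ‖w t‖ ^ 2 ≤ D₂ := by
    filter_upwards [hwf', hwsupp] with t h1 h2
    by_cases ht : t ∈ F
    · exact (h1 ht).2
    · simp [h2 ht]; linarith
  constructor
  · -- orthogonality implies null intersection
    intro hor
    have h0 := hor _ ⟨v, hv, hvsupp, rfl⟩ _ ⟨w, hw, hwsupp, rfl⟩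
    set f₁ : X → ℂ := fun t => v t * conj (v t) with hf₁def
    set f₂ : X → ℂ := fun t => w t * conj (w t) with hf₂def
    have hf₁m : AEStronglyMeasurable f₁ μ :=
      hv.aestronglyMeasurable.mul (RCLike.continuous_conj.comp_aestronglyMeasurable hv.aestronglyMeasurable)
    have hf₂m : AEStronglyMeasurable f₂ μ :=
      hw.aestronglyMeasurable.mul (RCLike.continuous_conj.comp_aestronglyMeasurable hw.aestronglyMeasurable)
    have hf₁ : MemLp f₁ 2 μ := by
      refine MemLp.of_bound hf₁m C₂ ?_
      filter_upwards [hvb] with t ht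
      simpa [hf₁def, norm_mul, ← sq] using ht
    have hf₂ : MemLp f₂ 2 μ := by
      refine MemLp.of_bound hf₂m D₂ ?_
      filter_upwards [hwb] with t ht
      simpa [hf₂def, norm_mul, ← sq] using ht
    have hps := parseval_aux μ χ hmeas hunit horth hcomp f₁ f₂ hf₁ hf₂
    have heq : ∑' g : G, (∫ t, v t * conj (χ g t * v t) ∂μ) * conj (∫ t, w t * conj (χ g t * w t) ∂μ)
        = ∑' g : G, (∫ t, f₁ t * conj (χ g t) ∂μ) * conj (∫ t, f₂ t * conj (χ g t) ∂μ) := by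
      refine tsum_congr fun g => ?_
      have e1 : ∫ t, v t * conj (χ g t * v t) ∂μ = ∫ t, f₁ t * conj (χ g t) ∂μ := by
        refine integral_congr_ae (Filter.Eventually.of_forall fun t => ?_)
        simp only [hf₁def, map_mul]; ring
      have e2 : ∫ t, w t * conj (χ g t * w t) ∂μ = ∫ t, f₂ t * conj (χ g t) ∂μ := by
        refine integral_congr_ae (Filter.Eventually.of_forall fun t => ?_)
        simp only [hf₂def, map_mul]; ring
      rw [e1, e2]
    rw [heq, hps] at h0
    -- now h0 : ∫ f₁ conj f₂ = 0 ; turn into real integral of ‖v‖²‖w‖²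
    set r : X → ℝ := fun t => ‖v t‖ ^ 2 * ‖w t‖ ^ 2 with hrdef
    have hptwise : ∀ t, f₁ t * conj (f₂ t) = ((r t : ℝ) : ℂ) := by
      intro t
      show v t * conj (v t) * conj (w t * conj (w t)) = _
      rw [map_mul, Complex.conj_conj, Complex.mul_conj', Complex.conj_mul']
      simp only [hrdef]
      norm_cast
    have h0' : ∫ t, r t ∂μ = 0 := by
      have hc : (∫ t, ((r t : ℝ) : ℂ) ∂μ) = 0 := by
        rw [← h0]
        exact integral_congr_ae (Filter.Eventually.of_forall fun t => (hptwise t).symm)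
      have h2 := (integral_ofReal (𝕜 := ℂ) (f := r) (μ := μ)).symm.trans hc
      exact Complex.ofReal_eq_zero.mp h2
    have hir : Integrable r μ := by
      refine memLp_one_iff_integrable.mp (MemLp.of_bound ?_ (C₂ * D₂) ?_)
      · have h1 : AEStronglyMeasurable (fun t => ‖v t‖ ^ 2) μ := (hv.aestronglyMeasurable.norm.pow 2)
        have h2 : AEStronglyMeasurable (fun t => ‖w t‖ ^ 2) μ := (hw.aestronglyMeasurable.norm.pow 2)
        exact h1.mul h2
      · filter_upwards [hvb, hwb] with t h1 h2
        have : r t = ‖v t‖ ^ 2 * ‖w t‖ ^ 2 := rfl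
        rw [Real.norm_eq_abs, abs_of_nonneg (by positivity)]
        exact mul_le_mul h1 h2 (by positivity) (by linarith)
    have hr0 : r =ᵐ[μ] 0 := by
      rw [← integral_eq_zero_iff_of_nonneg_ae (Filter.Eventually.of_forall fun t => by positivity) hir]
      exact h0'
    have : ∀ᵐ t ∂μ, t ∉ E ∩ F := by
      filter_upwards [hr0, hvf', hwf'] with t h1 h2 h3
      rintro ⟨htE, htF⟩
      have hv1 := (h2 htE).1
      have hw1 := (h3 htF).1
      have : ‖v t‖ ^ 2 * ‖w t‖ ^ 2 = 0 := h1
      nlinarith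
    exact measure_eq_zero_iff_ae_notMem.mpr this
  · -- null intersection implies orthogonality
    intro hnull a ha b hb
    obtain ⟨h, hh2, hhE, rfl⟩ := ha
    obtain ⟨k, hk2, hkF, rfl⟩ := hb
    set f₁ : X → ℂ := fun t => h t * conj (v t) with hf₁def
    set f₂ : X → ℂ := fun t => k t * conj (w t) with hf₂def
    have hf₁m : AEStronglyMeasurable f₁ μ :=
      hh2.aestronglyMeasurable.mul (RCLike.continuous_conj.comp_aestronglyMeasurable hv.aestronglyMeasurable)
    have hf₂m : AEStronglyMeasurable f₂ μ :=
      hk2.aestronglyMeasurable.mul (RCLike.continuous_conj.comp_aestronglyMeasurable hw.aestronglyMeasurable)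
    have hf₁ : MemLp f₁ 2 μ := by
      refine MemLp.of_le (hh2.const_mul ((Real.sqrt C₂ : ℝ) : ℂ)) hf₁m ?_
      filter_upwards [hvb] with t ht
      have hvt : ‖v t‖ ≤ Real.sqrt C₂ := by
        have := Real.sqrt_le_sqrt ht
        rwa [Real.sqrt_sq (norm_nonneg _)] at this
      calc ‖f₁ t‖ = ‖h t‖ * ‖v t‖ := by simp [hf₁def, norm_mul]
        _ ≤ Real.sqrt C₂ * ‖h t‖ := by nlinarith [norm_nonneg (h t), norm_nonneg (v t)]
        _ = ‖((Real.sqrt C₂ : ℝ) : ℂ) * h t‖ := by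
            simp [norm_mul, Complex.norm_real, abs_of_nonneg (Real.sqrt_nonneg _)]
    have hf₂ : MemLp f₂ 2 μ := by
      refine MemLp.of_le (hk2.const_mul ((Real.sqrt D₂ : ℝ) : ℂ)) hf₂m ?_
      filter_upwards [hwb] with t ht
      have hwt : ‖w t‖ ≤ Real.sqrt D₂ := by
        have := Real.sqrt_le_sqrt ht
        rwa [Real.sqrt_sq (norm_nonneg _)] at this
      calc ‖f₂ t‖ = ‖k t‖ * ‖w t‖ := by simp [hf₂def, norm_mul]
        _ ≤ Real.sqrt D₂ * ‖k t‖ := by nlinarith [norm_nonneg (k t), norm_nonneg (w t)]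
        _ = ‖((Real.sqrt D₂ : ℝ) : ℂ) * k t‖ := by
            simp [norm_mul, Complex.norm_real, abs_of_nonneg (Real.sqrt_nonneg _)]
    have hps := parseval_aux μ χ hmeas hunit horth hcomp f₁ f₂ hf₁ hf₂
    have heq : ∑' g : G, (∫ t, h t * conj (χ g t * v t) ∂μ) * conj (∫ t, k t * conj (χ g t * w t) ∂μ)
        = ∑' g : G, (∫ t, f₁ t * conj (χ g t) ∂μ) * conj (∫ t, f₂ t * conj (χ g t) ∂μ) := by
      refine tsum_congr fun g => ?_
      have e1 : ∫ t, h t * conj (χ g t * v t) ∂μ = ∫ t, f₁ t * conj (χ g t) ∂μ := by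
        refine integral_congr_ae (Filter.Eventually.of_forall fun t => ?_)
        simp only [hf₁def, map_mul]; ring
      have e2 : ∫ t, k t * conj (χ g t * w t) ∂μ = ∫ t, f₂ t * conj (χ g t) ∂μ := by
        refine integral_congr_ae (Filter.Eventually.of_forall fun t => ?_)
        simp only [hf₂def, map_mul]; ring
      rw [e1, e2]
    rw [heq, hps]
    refine integral_eq_zero_of_ae ?_
    filter_upwards [hhE, hkF, measure_eq_zero_iff_ae_notMem.mp hnull] with t h1 h2 h3
    by_cases ht : t ∈ E
    · have htF : t ∉ F := fun htf => h3 ⟨ht, htf⟩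
      simp [hf₂def, h2 htF]
    · simp [hf₁def, h1 ht]
end

section
/- Let G be a countable discrete abelian group acting on H = L²(E, λ|_E) and K = L²(F, λ|_F) by multiplication by characters, with frame vectors v ∈ H and w ∈ K. Then the range of the analysis operator Θ_v (as a subspace of ℓ²(G)) is contained in the range of Θ_w if and only if E ⊆ F modulo λ-null sets. -/
open MeasureTheory ComplexConjugate

/-- For frame vectors `v ∈ L²(E, λ|_E)` and `w ∈ L²(F, λ|_F)`, the range of
the analysis operator `Θ_v` in `ℓ²(G)` is contained in that of `Θ_w` iff `E ⊆ F` modulo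
`λ`-null sets. -/
theorem stmt3 {G X : Type*} [CommGroup G] [Countable G] [DecidableEq G] [MeasurableSpace X]
    (μ : Measure X) [IsProbabilityMeasure μ]
    (χ : G → X → ℂ)
    (hmeas : ∀ g, Measurable (χ g))
    (hunit : ∀ g x, ‖χ g x‖ = 1)
    (hhom : ∀ g g' x, χ (g * g') x = χ g x * χ g' x)
    (horth : ∀ g g' : G, ∫ x, χ g x * conj (χ g' x) ∂μ = if g = g' then (1 : ℂ) else 0)
    (hcomp : ∀ f : X → ℂ, MemLp f 2 μ →
      (∀ g : G, ∫ x, f x * conj (χ g x) ∂μ = 0) → f =ᵐ[μ] 0)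
    (E F : Set X) (hE : MeasurableSet E) (hF : MeasurableSet F)
    (v w : X → ℂ) (hv : MemLp v 2 μ) (hw : MemLp w 2 μ)
    (hvsupp : ∀ᵐ t ∂μ, t ∉ E → v t = 0) (hwsupp : ∀ᵐ t ∂μ, t ∉ F → w t = 0)
    -- v and w are frame vectors: |v|², |w|² bounded above and below a.e. on E, F
    (hvframe : ∃ C₁ C₂ : ℝ, 0 < C₁ ∧ C₁ ≤ C₂ ∧
      ∀ᵐ t ∂(μ.restrict E), C₁ ≤ ‖v t‖ ^ 2 ∧ ‖v t‖ ^ 2 ≤ C₂)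
    (hwframe : ∃ C₁ C₂ : ℝ, 0 < C₁ ∧ C₁ ≤ C₂ ∧
      ∀ᵐ t ∂(μ.restrict F), C₁ ≤ ‖w t‖ ^ 2 ∧ ‖w t‖ ^ 2 ≤ C₂) :
    ({a : G → ℂ | ∃ h : X → ℂ, MemLp h 2 μ ∧ (∀ᵐ t ∂μ, t ∉ E → h t = 0) ∧
        a = fun g => ∫ t, h t * conj (χ g t * v t) ∂μ} ⊆
      {b : G → ℂ | ∃ h : X → ℂ, MemLp h 2 μ ∧ (∀ᵐ t ∂μ, t ∉ F → h t = 0) ∧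
        b = fun g => ∫ t, h t * conj (χ g t * w t) ∂μ})
    ↔ μ (E \ F) = 0 := by
  obtain ⟨A₁, A₂, hA₁, hA₁₂, hvfr⟩ := hvframe
  obtain ⟨B₁, B₂, hB₁, hB₁₂, hwfr⟩ := hwframe
  have hvfr' : ∀ᵐ t ∂μ, t ∈ E → (A₁ ≤ ‖v t‖ ^ 2 ∧ ‖v t‖ ^ 2 ≤ A₂) :=
    (ae_restrict_iff' hE).mp hvfr
  have hwfr' : ∀ᵐ t ∂μ, t ∈ F → (B₁ ≤ ‖w t‖ ^ 2 ∧ ‖w t‖ ^ 2 ≤ B₂) :=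
    (ae_restrict_iff' hF).mp hwfr
  have hconjv : AEStronglyMeasurable (fun t => conj (v t)) μ :=
    Complex.continuous_conj.comp_aestronglyMeasurable hv.1
  have hconjw : AEStronglyMeasurable (fun t => conj (w t)) μ :=
    Complex.continuous_conj.comp_aestronglyMeasurable hw.1
  constructor
  · intro hsub
    obtain ⟨h', hh'2, hh'supp, hEq⟩ := hsub ⟨v, hv, hvsupp, rfl⟩
    have hEq' : ∀ g, ∫ t, v t * conj (χ g t * v t) ∂μ = ∫ t, h' t * conj (χ g t * w t) ∂μ :=
      fun g => congrFun hEq g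
    set f : X → ℂ := fun t => v t * conj (v t) - h' t * conj (w t) with hf
    have memA : MemLp (fun t => v t * conj (v t)) 2 μ := by
      refine MemLp.of_bound (hv.1.mul hconjv) A₂ ?_
      filter_upwards [hvfr', hvsupp] with t h1 h2
      by_cases ht : t ∈ E
      · have h3 := (h1 ht).2
        calc ‖v t * conj (v t)‖ = ‖v t‖ ^ 2 := by
              rw [norm_mul, RCLike.norm_conj]; ring
          _ ≤ A₂ := h3
      · simp only [h2 ht, zero_mul, norm_zero]
        linarith
    have memB : MemLp (fun t => h' t * conj (w t)) 2 μ := by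
      refine MemLp.of_le_mul (c := Real.sqrt B₂) hh'2 (hh'2.1.mul hconjw) ?_
      filter_upwards [hwfr', hwsupp] with t h1 h2
      by_cases ht : t ∈ F
      · have h3 := (h1 ht).2
        have hnw : ‖w t‖ ≤ Real.sqrt B₂ := by
          rw [← Real.sqrt_sq (norm_nonneg (w t))]
          exact Real.sqrt_le_sqrt h3
        rw [norm_mul, RCLike.norm_conj, mul_comm]
        exact mul_le_mul_of_nonneg_right hnw (norm_nonneg _)
      · simp only [h2 ht, map_zero, mul_zero, norm_zero]
        positivity
    have hf2 : MemLp f 2 μ := memA.sub memB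
    have hint : ∀ (A : X → ℂ), MemLp A 2 μ → ∀ g,
        Integrable (fun t => A t * conj (χ g t)) μ := by
      intro A hA g
      have hm : AEStronglyMeasurable (fun t => A t * conj (χ g t)) μ :=
        hA.1.mul (Complex.continuous_conj.measurable.comp (hmeas g)).aestronglyMeasurable
      have : MemLp (fun t => A t * conj (χ g t)) 2 μ := by
        refine MemLp.of_le_mul (c := 1) hA hm ?_
        refine Filter.Eventually.of_forall fun t => ?_
        rw [norm_mul, RCLike.norm_conj, hunit, mul_one, one_mul]
      exact this.integrable one_le_two
    have hzero : ∀ g, ∫ t, f t * conj (χ g t) ∂μ = 0 := by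
      intro g
      have h1 := hint _ memA g
      have h2 := hint _ memB g
      have split : ∫ t, f t * conj (χ g t) ∂μ
          = (∫ t, v t * conj (v t) * conj (χ g t) ∂μ)
            - ∫ t, h' t * conj (w t) * conj (χ g t) ∂μ := by
        simp only [hf, sub_mul]
        exact integral_sub h1 h2
      have e1 : ∫ t, v t * conj (v t) * conj (χ g t) ∂μ
          = ∫ t, v t * conj (χ g t * v t) ∂μ := by
        refine integral_congr_ae (Filter.Eventually.of_forall fun t => ?_)
        simp only [map_mul]; ring
      have e2 : ∫ t, h' t * conj (w t) * conj (χ g t) ∂μ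
          = ∫ t, h' t * conj (χ g t * w t) ∂μ := by
        refine integral_congr_ae (Filter.Eventually.of_forall fun t => ?_)
        simp only [map_mul]; ring
      rw [split, e1, e2, hEq' g, sub_self]
    have hae0 := hcomp f hf2 hzero
    have hfinal : ∀ᵐ t ∂μ, t ∉ E \ F := by
      filter_upwards [hae0, hvfr', hh'supp] with t h1 h2 h3
      rintro ⟨htE, htF⟩
      have hv1 := (h2 htE).1
      have hw0 := h3 htF
      simp only [hf, hw0, zero_mul, sub_zero, Pi.zero_apply] at h1
      rw [Complex.mul_conj] at h1
      have h4 : Complex.normSq (v t) = 0 := by exact_mod_cast h1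
      have h5 : v t = 0 := Complex.normSq_eq_zero.mp h4
      rw [h5, norm_zero] at hv1
      simp only [ne_eq, OfNat.ofNat_ne_zero, not_false_eq_true, zero_pow] at hv1
      linarith
    rw [ae_iff] at hfinal
    refine measure_mono_null (fun t ht => ?_) hfinal
    exact fun hc => hc ht
  · intro hEF b hb
    obtain ⟨h, hh2, hhsupp, ha⟩ := hb
    have hEF' : ∀ᵐ t ∂μ, t ∈ E → t ∈ F := by
      rw [ae_iff]
      refine measure_mono_null (fun t ht => ?_) hEF
      exact ⟨(_root_.not_imp.mp ht).1, (_root_.not_imp.mp ht).2⟩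
    set h' : X → ℂ := fun t => h t * conj (v t) * w t / ((‖w t‖ ^ 2 : ℝ) : ℂ) with hh'
    have hh'm : AEStronglyMeasurable h' μ := by
      apply AEMeasurable.aestronglyMeasurable
      exact ((hh2.1.aemeasurable.mul
          (Complex.continuous_conj.measurable.comp_aemeasurable hv.1.aemeasurable)).mul
          hw.1.aemeasurable).div
        (Complex.measurable_ofReal.comp_aemeasurable (hw.1.aemeasurable.norm.pow_const 2))
    have hkey : ∀ᵐ t ∂μ, h' t * conj (w t) = h t * conj (v t) := by
      filter_upwards [hEF', hhsupp, hwfr', hwsupp] with t h1 h2 h3 h4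
      by_cases htF : t ∈ F
      · have hwne : w t ≠ 0 := by
          intro h0
          have h5 := (h3 htF).1
          rw [h0, norm_zero] at h5
          simp only [ne_eq, OfNat.ofNat_ne_zero, not_false_eq_true, zero_pow] at h5
          linarith
        have hd : ((‖w t‖ ^ 2 : ℝ) : ℂ) ≠ 0 :=
          Complex.ofReal_ne_zero.mpr (pow_ne_zero 2 (norm_ne_zero_iff.mpr hwne))
        have hc : w t * conj (w t) = ((‖w t‖ ^ 2 : ℝ) : ℂ) := by
          rw [Complex.mul_conj, Complex.normSq_eq_norm_sq]
        calc h' t * conj (w t)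
            = h t * conj (v t) * (w t * conj (w t)) / ((‖w t‖ ^ 2 : ℝ) : ℂ) := by
              rw [hh']; ring
          _ = h t * conj (v t) := by
              rw [hc, mul_div_assoc, div_self hd, mul_one]
      · have hw0 := h4 htF
        have hh0 : h t = 0 := h2 (fun htE => htF (h1 htE))
        simp [hh', hw0, hh0]
    have hb' : ∀ᵐ t ∂μ, ‖h' t‖ ≤ (Real.sqrt A₂ / Real.sqrt B₁) * ‖h t‖ := by
      filter_upwards [hvfr', hwfr', hhsupp, hwsupp] with t h1 h2 h3 h4
      by_cases hh0 : h t = 0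
      · simp [hh', hh0]
      by_cases hw0 : w t = 0
      · simp only [hh', hw0, mul_zero, zero_div, norm_zero]
        positivity
      · have htE : t ∈ E := by by_contra hx; exact hh0 (h3 hx)
        have htF : t ∈ F := by by_contra hx; exact hw0 (h4 hx)
        have hv2 := (h1 htE).2
        have hw1 := (h2 htF).1
        have hnv : ‖v t‖ ≤ Real.sqrt A₂ := by
          rw [← Real.sqrt_sq (norm_nonneg (v t))]
          exact Real.sqrt_le_sqrt hv2
        have hnw : Real.sqrt B₁ ≤ ‖w t‖ := by
          rw [← Real.sqrt_sq (norm_nonneg (w t))]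
          exact Real.sqrt_le_sqrt hw1
        have hB1p : 0 < Real.sqrt B₁ := Real.sqrt_pos.mpr hB₁
        have hwp : 0 < ‖w t‖ := lt_of_lt_of_le hB1p hnw
        have hden : ‖(((‖w t‖ ^ 2 : ℝ)) : ℂ)‖ = ‖w t‖ ^ 2 := by
          rw [Complex.norm_real, Real.norm_eq_abs, abs_of_nonneg (by positivity)]
        have hnorm : ‖h' t‖ = ‖v t‖ / ‖w t‖ * ‖h t‖ := by
          rw [hh']
          rw [norm_div, norm_mul, norm_mul, RCLike.norm_conj, hden]
          have hne : ‖w t‖ ≠ 0 := hwp.ne'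
          have hne' : ‖w t‖ ≠ 0 := by
            exact hne
          field_simp
        rw [hnorm]
        refine mul_le_mul_of_nonneg_right ?_ (norm_nonneg _)
        exact div_le_div₀ (Real.sqrt_nonneg _) hnv hB1p hnw
    have hsupp' : ∀ᵐ t ∂μ, t ∉ F → h' t = 0 := by
      filter_upwards [hwsupp] with t h4 htF
      simp [hh', h4 htF]
    refine ⟨h', MemLp.of_le_mul hh2 hh'm hb', hsupp', ?_⟩
    rw [ha]
    funext g
    refine integral_congr_ae ?_
    filter_upwards [hkey] with t ht
    simp only [map_mul]
    calc h t * (conj (χ g t) * conj (v t)) = h t * conj (v t) * conj (χ g t) := by ring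
      _ = h' t * conj (w t) * conj (χ g t) := by rw [ht]
      _ = h' t * (conj (χ g t) * conj (w t)) := by ring
end

section
/- Let G be a countable discrete abelian group acting on H = L²(E, λ|_E) and K = L²(F, λ|_F) by multiplication by characters, with frame vectors v ∈ H and w ∈ K. Then the ranges of the analysis operators Θ_v(H) and Θ_w(K) in ℓ²(G) have nontrivial intersection if and only if λ(E ∩ F) > 0. -/
open MeasureTheory ComplexConjugate

private lemma aux_conj_aesm {X : Type*} [MeasurableSpace X] {μ : Measure X} {v : X → ℂ}
    (hv : AEStronglyMeasurable v μ) :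
    AEStronglyMeasurable (fun t => conj (v t)) μ :=
  RCLike.continuous_conj.comp_aestronglyMeasurable hv

/-- For frame vectors `v ∈ L²(E, λ|_E)` and `w ∈ L²(F, λ|_F)`, the ranges of
the analysis operators `Θ_v(H)` and `Θ_w(K)` in `ℓ²(G)` have nontrivial intersection iff
`λ(E ∩ F) > 0`. -/
theorem stmt4 {G X : Type*} [CommGroup G] [Countable G] [DecidableEq G] [MeasurableSpace X]
    (μ : Measure X) [IsProbabilityMeasure μ]
    (χ : G → X → ℂ)
    (hmeas : ∀ g, Measurable (χ g))
    (hunit : ∀ g x, ‖χ g x‖ = 1)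
    (hhom : ∀ g g' x, χ (g * g') x = χ g x * χ g' x)
    (horth : ∀ g g' : G, ∫ x, χ g x * conj (χ g' x) ∂μ = if g = g' then (1 : ℂ) else 0)
    (hcomp : ∀ f : X → ℂ, MemLp f 2 μ →
      (∀ g : G, ∫ x, f x * conj (χ g x) ∂μ = 0) → f =ᵐ[μ] 0)
    (E F : Set X) (hE : MeasurableSet E) (hF : MeasurableSet F)
    (v w : X → ℂ) (hv : MemLp v 2 μ) (hw : MemLp w 2 μ)
    (hvsupp : ∀ᵐ t ∂μ, t ∉ E → v t = 0) (hwsupp : ∀ᵐ t ∂μ, t ∉ F → w t = 0)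
    -- v and w are frame vectors: |v|², |w|² bounded above and below a.e. on E, F
    (hvframe : ∃ C₁ C₂ : ℝ, 0 < C₁ ∧ C₁ ≤ C₂ ∧
      ∀ᵐ t ∂(μ.restrict E), C₁ ≤ ‖v t‖ ^ 2 ∧ ‖v t‖ ^ 2 ≤ C₂)
    (hwframe : ∃ C₁ C₂ : ℝ, 0 < C₁ ∧ C₁ ≤ C₂ ∧
      ∀ᵐ t ∂(μ.restrict F), C₁ ≤ ‖w t‖ ^ 2 ∧ ‖w t‖ ^ 2 ≤ C₂) :
    (∃ a : G → ℂ, a ≠ 0 ∧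
      a ∈ {a : G → ℂ | ∃ h : X → ℂ, MemLp h 2 μ ∧ (∀ᵐ t ∂μ, t ∉ E → h t = 0) ∧
        a = fun g => ∫ t, h t * conj (χ g t * v t) ∂μ} ∧
      a ∈ {b : G → ℂ | ∃ h : X → ℂ, MemLp h 2 μ ∧ (∀ᵐ t ∂μ, t ∉ F → h t = 0) ∧
        b = fun g => ∫ t, h t * conj (χ g t * w t) ∂μ})
    ↔ 0 < μ (E ∩ F) := by
  classical
  obtain ⟨Cv₁, Cv₂, hCv₁, hCv₁₂, hvb⟩ := hvframe
  obtain ⟨Cw₁, Cw₂, hCw₁, hCw₁₂, hwb⟩ := hwframe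
  have hCv₂ : (0:ℝ) ≤ Cv₂ := le_trans hCv₁.le hCv₁₂
  have hCw₂ : (0:ℝ) ≤ Cw₂ := le_trans hCw₁.le hCw₁₂
  have hvE : ∀ᵐ t ∂μ, t ∈ E → Cv₁ ≤ ‖v t‖ ^ 2 ∧ ‖v t‖ ^ 2 ≤ Cv₂ :=
    (ae_restrict_iff' hE).mp hvb
  have hwF : ∀ᵐ t ∂μ, t ∈ F → Cw₁ ≤ ‖w t‖ ^ 2 ∧ ‖w t‖ ^ 2 ≤ Cw₂ :=
    (ae_restrict_iff' hF).mp hwb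
  have hvbd : ∀ᵐ t ∂μ, ‖v t‖ ≤ Real.sqrt Cv₂ := by
    filter_upwards [hvsupp, hvE] with t h0 h1
    by_cases ht : t ∈ E
    · exact (Real.le_sqrt (norm_nonneg _) hCv₂).mpr (h1 ht).2
    · simp [h0 ht, Real.sqrt_nonneg]
  have hwbd : ∀ᵐ t ∂μ, ‖w t‖ ≤ Real.sqrt Cw₂ := by
    filter_upwards [hwsupp, hwF] with t h0 h1
    by_cases ht : t ∈ F
    · exact (Real.le_sqrt (norm_nonneg _) hCw₂).mpr (h1 ht).2
    · simp [h0 ht, Real.sqrt_nonneg]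
  have hχm : ∀ g, AEStronglyMeasurable (fun t => conj (χ g t)) μ :=
    fun g => aux_conj_aesm (hmeas g).aestronglyMeasurable
  -- integrability of f * conj χ g for f ∈ L²
  have hint : ∀ (f : X → ℂ), MemLp f 2 μ → ∀ g : G,
      Integrable (fun t => f t * conj (χ g t)) μ := by
    intro f hf g
    have h1 : Integrable f μ := hf.integrable (by norm_num)
    have h2 : Integrable (fun t => conj (χ g t) * f t) μ :=
      h1.bdd_mul (c := 1) (hχm g) (Filter.Eventually.of_forall fun x => by rw [RCLike.norm_conj, hunit])
    exact h2.congr (Filter.Eventually.of_forall fun t => mul_comm _ _)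
  constructor
  · rintro ⟨a, ha, ⟨h₁, hh₁, hh₁E, rfl⟩, h₂, hh₂, hh₂F, heq⟩
    have e1 : ∀ g : G, (∫ t, h₁ t * conj (χ g t * v t) ∂μ)
        = ∫ t, (h₁ t * conj (v t)) * conj (χ g t) ∂μ := by
      intro g
      refine integral_congr_ae (Filter.Eventually.of_forall fun t => ?_)
      simp only [map_mul]; ring
    have e2 : ∀ g : G, (∫ t, h₂ t * conj (χ g t * w t) ∂μ)
        = ∫ t, (h₂ t * conj (w t)) * conj (χ g t) ∂μ := by
      intro g
      refine integral_congr_ae (Filter.Eventually.of_forall fun t => ?_)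
      simp only [map_mul]; ring
    set f₁ : X → ℂ := fun t => h₁ t * conj (v t) with hf₁def
    set f₂ : X → ℂ := fun t => h₂ t * conj (w t) with hf₂def
    have hf₁m : AEStronglyMeasurable f₁ μ :=
      hh₁.aestronglyMeasurable.mul (aux_conj_aesm hv.aestronglyMeasurable)
    have hf₂m : AEStronglyMeasurable f₂ μ :=
      hh₂.aestronglyMeasurable.mul (aux_conj_aesm hw.aestronglyMeasurable)
    have hf₁2 : MemLp f₁ 2 μ := by
      refine MemLp.of_le_mul (c := Real.sqrt Cv₂) hh₁ hf₁m ?_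
      filter_upwards [hvbd] with t ht
      calc ‖f₁ t‖ = ‖v t‖ * ‖h₁ t‖ := by
            rw [hf₁def]; simp only [norm_mul, RCLike.norm_conj]; ring
        _ ≤ Real.sqrt Cv₂ * ‖h₁ t‖ := mul_le_mul_of_nonneg_right ht (norm_nonneg _)
    have hf₂2 : MemLp f₂ 2 μ := by
      refine MemLp.of_le_mul (c := Real.sqrt Cw₂) hh₂ hf₂m ?_
      filter_upwards [hwbd] with t ht
      calc ‖f₂ t‖ = ‖w t‖ * ‖h₂ t‖ := by
            rw [hf₂def]; simp only [norm_mul, RCLike.norm_conj]; ring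
        _ ≤ Real.sqrt Cw₂ * ‖h₂ t‖ := mul_le_mul_of_nonneg_right ht (norm_nonneg _)
    have hze : ∀ g : G, ∫ t, (f₁ t - f₂ t) * conj (χ g t) ∂μ = 0 := by
      intro g
      have hsplit : (∫ t, (f₁ t - f₂ t) * conj (χ g t) ∂μ)
          = (∫ t, f₁ t * conj (χ g t) ∂μ) - ∫ t, f₂ t * conj (χ g t) ∂μ := by
        rw [← integral_sub (hint f₁ hf₁2 g) (hint f₂ hf₂2 g)]
        exact integral_congr_ae (Filter.Eventually.of_forall fun t => by ring)
      rw [hsplit, ← e1 g, ← e2 g, congrFun heq g, sub_self]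
    have hfe : f₁ =ᵐ[μ] f₂ := by
      have := hcomp (fun t => f₁ t - f₂ t) (hf₁2.sub hf₂2) hze
      filter_upwards [this] with t ht
      have ht' : f₁ t - f₂ t = 0 := ht
      exact sub_eq_zero.mp ht'
    obtain ⟨g, hg⟩ := Function.ne_iff.mp ha
    have hg' : (∫ t, h₁ t * conj (χ g t * v t) ∂μ) ≠ 0 := hg
    have hne : ¬ (∀ᵐ t ∂μ, f₁ t = 0) := by
      intro h
      apply hg'
      rw [e1 g]
      have hz : (fun t => f₁ t * conj (χ g t)) =ᵐ[μ] (fun _ => (0:ℂ)) := by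
        filter_upwards [h] with t ht; rw [ht, zero_mul]
      rw [integral_congr_ae hz, integral_const, smul_zero]
    have hμne : μ {t | ¬ f₁ t = 0} ≠ 0 := fun h0 => hne (ae_iff.mpr h0)
    have hsub : μ {t | ¬ f₁ t = 0} ≤ μ (E ∩ F) := by
      refine measure_mono_ae ?_
      filter_upwards [hvsupp, hwsupp, hfe] with t h0v h0w hf ht
      refine ⟨?_, ?_⟩
      · by_contra hE'
        exact ht (by show h₁ t * conj (v t) = 0; rw [h0v hE', map_zero, mul_zero])
      · by_contra hF'
        refine ht ?_
        have hf' : h₁ t * conj (v t) = h₂ t * conj (w t) := hf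
        show h₁ t * conj (v t) = 0
        rw [hf', h0w hF', map_zero, mul_zero]
      -- done
    exact lt_of_lt_of_le (pos_iff_ne_zero.mpr hμne) hsub
  · intro hEF
    set h₁ : X → ℂ := (E ∩ F).indicator (fun t => conj (w t)) with hh₁def
    set h₂ : X → ℂ := (E ∩ F).indicator (fun t => conj (v t)) with hh₂def
    set f : X → ℂ := (E ∩ F).indicator (fun t => conj (w t) * conj (v t)) with hfdef
    have hEFm : MeasurableSet (E ∩ F) := hE.inter hF
    have hh₁m : AEStronglyMeasurable h₁ μ :=
      (aux_conj_aesm hw.aestronglyMeasurable).indicator hEFm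
    have hh₂m : AEStronglyMeasurable h₂ μ :=
      (aux_conj_aesm hv.aestronglyMeasurable).indicator hEFm
    have hfm : AEStronglyMeasurable f μ :=
      ((aux_conj_aesm hw.aestronglyMeasurable).mul
        (aux_conj_aesm hv.aestronglyMeasurable)).indicator hEFm
    have hh₁2 : MemLp h₁ 2 μ := by
      refine (memLp_top_of_bound hh₁m (Real.sqrt Cw₂) ?_).mono_exponent le_top
      filter_upwards [hwbd] with t ht
      by_cases htm : t ∈ E ∩ F
      · rw [hh₁def, Set.indicator_of_mem htm, RCLike.norm_conj]; exact ht
      · rw [hh₁def, Set.indicator_of_notMem htm, norm_zero]; exact Real.sqrt_nonneg _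
    have hh₂2 : MemLp h₂ 2 μ := by
      refine (memLp_top_of_bound hh₂m (Real.sqrt Cv₂) ?_).mono_exponent le_top
      filter_upwards [hvbd] with t ht
      by_cases htm : t ∈ E ∩ F
      · rw [hh₂def, Set.indicator_of_mem htm, RCLike.norm_conj]; exact ht
      · rw [hh₂def, Set.indicator_of_notMem htm, norm_zero]; exact Real.sqrt_nonneg _
    have hf2 : MemLp f 2 μ := by
      refine (memLp_top_of_bound hfm (Real.sqrt Cw₂ * Real.sqrt Cv₂) ?_).mono_exponent
        le_top
      filter_upwards [hvbd, hwbd] with t htv htw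
      by_cases htm : t ∈ E ∩ F
      · rw [hfdef, Set.indicator_of_mem htm, norm_mul, RCLike.norm_conj, RCLike.norm_conj]
        exact mul_le_mul htw htv (norm_nonneg _) (Real.sqrt_nonneg _)
      · rw [hfdef, Set.indicator_of_notMem htm, norm_zero]
        exact mul_nonneg (Real.sqrt_nonneg _) (Real.sqrt_nonneg _)
    -- the common integrand
    have key1 : ∀ g : G, ∀ t : X, h₁ t * conj (χ g t * v t) = f t * conj (χ g t) := by
      intro g t
      by_cases htm : t ∈ E ∩ F
      · rw [hh₁def, hfdef, Set.indicator_of_mem htm, Set.indicator_of_mem htm, map_mul]; ring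
      · rw [hh₁def, hfdef, Set.indicator_of_notMem htm, Set.indicator_of_notMem htm,
          zero_mul, zero_mul]
    have key2 : ∀ g : G, ∀ t : X, h₂ t * conj (χ g t * w t) = f t * conj (χ g t) := by
      intro g t
      by_cases htm : t ∈ E ∩ F
      · rw [hh₂def, hfdef, Set.indicator_of_mem htm, Set.indicator_of_mem htm, map_mul]; ring
      · rw [hh₂def, hfdef, Set.indicator_of_notMem htm, Set.indicator_of_notMem htm,
          zero_mul, zero_mul]
    refine ⟨fun g => ∫ t, h₁ t * conj (χ g t * v t) ∂μ, ?_, ⟨h₁, hh₁2, ?_, rfl⟩,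
      ⟨h₂, hh₂2, ?_, ?_⟩⟩
    · -- a ≠ 0
      intro ha0
      have hallz : ∀ g : G, ∫ t, f t * conj (χ g t) ∂μ = 0 := by
        intro g
        have := congrFun ha0 g
        simp only [Pi.zero_apply] at this
        rw [← this]
        exact integral_congr_ae (Filter.Eventually.of_forall fun t => (key1 g t).symm)
      have hfz : f =ᵐ[μ] 0 := hcomp f hf2 hallz
      have hnm : ∀ᵐ t ∂μ, t ∉ E ∩ F := by
        filter_upwards [hfz, hvE, hwF] with t hz hv' hw'
        intro htm
        have hv0 : 0 < ‖v t‖ := by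
          have := (hv' htm.1).1
          nlinarith [norm_nonneg (v t)]
        have hw0 : 0 < ‖w t‖ := by
          have := (hw' htm.2).1
          nlinarith [norm_nonneg (w t)]
        have h0 : conj (w t) * conj (v t) = 0 := by
          have hz' : f t = 0 := hz
          rwa [hfdef, Set.indicator_of_mem htm] at hz'
        have : ‖w t‖ * ‖v t‖ = 0 := by
          have := congrArg norm h0
          rwa [norm_mul, RCLike.norm_conj, RCLike.norm_conj, norm_zero] at this
        nlinarith
      exact absurd (measure_eq_zero_iff_ae_notMem.mpr hnm) (ne_of_gt hEF)
    · -- h₁ supported in E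
      refine Filter.Eventually.of_forall fun t ht => ?_
      rw [hh₁def, Set.indicator_of_notMem (fun hm => ht hm.1)]
    · -- h₂ supported in F
      refine Filter.Eventually.of_forall fun t ht => ?_
      rw [hh₂def, Set.indicator_of_notMem (fun hm => ht hm.2)]
    · -- equality of the two analysis sequences
      funext g
      refine integral_congr_ae (Filter.Eventually.of_forall fun t => ?_)
      show h₁ t * conj (χ g t * v t) = h₂ t * conj (χ g t * w t)
      rw [key1 g t, key2 g t]
end

section
/- Let G be a countable discrete abelian group acting by multiplication by characters on H = L²(F, λ|_F). Let w ∈ H be a Bessel vector (i.e. |w| is essentially bounded) and v ∈ H a frame vector for this representation. Then the range of the analysis operator Θ_w is contained in the range of the analysis operator Θ_v in ℓ²(G). -/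
open MeasureTheory ComplexConjugate

/-- If `w ∈ H = L²(F, λ|_F)` is a Bessel vector (essentially bounded) and
`v ∈ H` is a frame vector for the representation by multiplication by characters, then the
range of the analysis operator `Θ_w` is contained in the range of `Θ_v` in `ℓ²(G)`. -/
theorem stmt7 {G X : Type*} [CommGroup G] [Countable G] [DecidableEq G] [MeasurableSpace X]
    (μ : Measure X) [IsProbabilityMeasure μ]
    (χ : G → X → ℂ)
    (hmeas : ∀ g, Measurable (χ g))
    (hunit : ∀ g x, ‖χ g x‖ = 1)
    (hhom : ∀ g g' x, χ (g * g') x = χ g x * χ g' x)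
    (horth : ∀ g g' : G, ∫ x, χ g x * conj (χ g' x) ∂μ = if g = g' then (1 : ℂ) else 0)
    (hcomp : ∀ f : X → ℂ, MemLp f 2 μ →
      (∀ g : G, ∫ x, f x * conj (χ g x) ∂μ = 0) → f =ᵐ[μ] 0)
    (F : Set X) (hF : MeasurableSet F)
    (w v : X → ℂ) (hw : MemLp w 2 μ) (hv : MemLp v 2 μ)
    (hwsupp : ∀ᵐ t ∂μ, t ∉ F → w t = 0) (hvsupp : ∀ᵐ t ∂μ, t ∉ F → v t = 0)
    -- w is a Bessel vector: |w| essentially bounded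
    (hwB : ∃ C : ℝ, ∀ᵐ t ∂μ, ‖w t‖ ≤ C)
    -- v is a frame vector: 0 < C₁ ≤ |v|² ≤ C₂ a.e. on F
    (hvframe : ∃ C₁ C₂ : ℝ, 0 < C₁ ∧ C₁ ≤ C₂ ∧
      ∀ᵐ t ∂(μ.restrict F), C₁ ≤ ‖v t‖ ^ 2 ∧ ‖v t‖ ^ 2 ≤ C₂) :
    {a : G → ℂ | ∃ h : X → ℂ, MemLp h 2 μ ∧ (∀ᵐ t ∂μ, t ∉ F → h t = 0) ∧
        a = fun g => ∫ t, h t * conj (χ g t * w t) ∂μ} ⊆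
      {a : G → ℂ | ∃ h : X → ℂ, MemLp h 2 μ ∧ (∀ᵐ t ∂μ, t ∉ F → h t = 0) ∧
        a = fun g => ∫ t, h t * conj (χ g t * v t) ∂μ} := by
  rintro a ⟨h, hh, hhsupp, rfl⟩
  obtain ⟨C, hC⟩ := hwB
  obtain ⟨C₁, C₂, hC₁, hC₁₂, hframe⟩ := hvframe
  set C' : ℝ := max C 0 with hC'def
  have hC'0 : 0 ≤ C' := le_max_right _ _
  have hC' : ∀ᵐ t ∂μ, ‖w t‖ ≤ C' := hC.mono fun t ht => le_trans ht (le_max_left _ _)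
  -- measurable representatives
  set h₁ := hh.1.mk h with hh₁def
  set w₁ := hw.1.mk w with hw₁def
  set v₁ := hv.1.mk v with hv₁def
  have hh₁ : h =ᵐ[μ] h₁ := hh.1.ae_eq_mk
  have hw₁ : w =ᵐ[μ] w₁ := hw.1.ae_eq_mk
  have hv₁ : v =ᵐ[μ] v₁ := hv.1.ae_eq_mk
  have mh₁ : Measurable h₁ := hh.1.stronglyMeasurable_mk.measurable
  have mw₁ : Measurable w₁ := hw.1.stronglyMeasurable_mk.measurable
  have mv₁ : Measurable v₁ := hv.1.stronglyMeasurable_mk.measurable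
  set h' : X → ℂ := fun t => if v₁ t = 0 then 0 else h₁ t * conj (w₁ t) / conj (v₁ t)
    with hh'def
  have mh' : Measurable h' := by
    apply Measurable.ite (mv₁ (measurableSet_singleton 0)) measurable_const
    have : ∀ f : X → ℂ, Measurable f → Measurable (fun t => conj (f t)) :=
      fun f hf => Complex.continuous_conj.measurable.comp hf
    exact (mh₁.mul (this _ mw₁)).div (this _ mv₁)
  -- the frame lower bound restated on μ
  have hframe' : ∀ᵐ t ∂μ, t ∈ F → C₁ ≤ ‖v t‖ ^ 2 := by
    have := (ae_restrict_iff' hF).mp hframe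
    exact this.mono fun t ht htF => (ht htF).1
  -- combined a.e. facts
  have hAE : ∀ᵐ t ∂μ, h t = h₁ t ∧ w t = w₁ t ∧ v t = v₁ t ∧ ‖w t‖ ≤ C' ∧
      (t ∈ F → C₁ ≤ ‖v t‖ ^ 2) ∧ (t ∉ F → w t = 0) ∧ (t ∉ F → v t = 0) := by
    filter_upwards [hh₁, hw₁, hv₁, hC', hframe', hwsupp, hvsupp] with t a b c d e f g
    exact ⟨a, b, c, d, e, f, g⟩
  have sqrtpos : 0 < Real.sqrt C₁ := Real.sqrt_pos.mpr hC₁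
  -- key pointwise facts a.e.
  have key : ∀ᵐ t ∂μ, h' t * conj (v t) = h t * conj (w t) ∧
      ‖h' t‖ ≤ ‖(((C' / Real.sqrt C₁ : ℝ) : ℂ)) * h t‖ ∧ (t ∉ F → h' t = 0) := by
    filter_upwards [hAE] with t ⟨eh, ew, ev, hwle, hvlb, hw0, hv0⟩
    by_cases htF : t ∈ F
    · have hvn : v t ≠ 0 := by
        intro hz
        rw [hz] at hvlb
        simp only [norm_zero] at hvlb
        nlinarith [hvlb htF]
      have hv₁n : v₁ t ≠ 0 := by rw [← ev]; exact hvn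
      have hvnorm : Real.sqrt C₁ ≤ ‖v t‖ := by
        have := hvlb htF
        calc Real.sqrt C₁ ≤ Real.sqrt (‖v t‖ ^ 2) := Real.sqrt_le_sqrt this
          _ = ‖v t‖ := Real.sqrt_sq (norm_nonneg _)
      have hve : h' t = h t * conj (w t) / conj (v t) := by
        simp only [hh'def, if_neg hv₁n, ← eh, ← ew, ← ev]
      refine ⟨?_, ?_, fun hc => absurd htF hc⟩
      · rw [hve]
        field_simp
        exact mul_div_cancel_right₀ _ (by simpa using hvn)
      · rw [hve]
        rw [norm_div, norm_mul, RCLike.norm_conj, RCLike.norm_conj, norm_mul,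
          Complex.norm_real, Real.norm_eq_abs, abs_of_nonneg (div_nonneg hC'0 sqrtpos.le)]
        rw [div_le_iff₀ (lt_of_lt_of_le sqrtpos hvnorm)]
        calc ‖h t‖ * ‖w t‖ ≤ ‖h t‖ * C' := by
              exact mul_le_mul_of_nonneg_left hwle (norm_nonneg _)
          _ = C' / Real.sqrt C₁ * ‖h t‖ * Real.sqrt C₁ := by
              field_simp
          _ ≤ C' / Real.sqrt C₁ * ‖h t‖ * ‖v t‖ := by
              refine mul_le_mul_of_nonneg_left hvnorm ?_
              positivity
    · have hv₁z : v₁ t = 0 := by rw [← ev]; exact hv0 htF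
      have hz : h' t = 0 := by simp only [hh'def, if_pos hv₁z]
      refine ⟨?_, ?_, fun _ => hz⟩
      · rw [hz, hw0 htF]; simp
      · rw [hz]; simp; positivity
  have hh' : MemLp h' 2 μ := by
    refine MemLp.of_le (hh.const_mul (((C' / Real.sqrt C₁ : ℝ) : ℂ))) mh'.aestronglyMeasurable ?_
    exact key.mono fun t ht => ht.2.1
  refine ⟨h', hh', key.mono fun t ht => ht.2.2, ?_⟩
  funext g
  apply integral_congr_ae
  filter_upwards [key] with t ⟨ht, _, _⟩
  have : h' t * (conj (χ g t) * conj (v t)) = h t * (conj (χ g t) * conj (w t)) := by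
    calc h' t * (conj (χ g t) * conj (v t)) = (h' t * conj (v t)) * conj (χ g t) := by ring
      _ = (h t * conj (w t)) * conj (χ g t) := by rw [ht]
      _ = h t * (conj (χ g t) * conj (w t)) := by ring
  simpa [map_mul] using this.symm
end

section
/- Let G be a countable discrete abelian group acting by multiplication by characters on H = L²(E₀) and K = L²(F₀), with Bessel vectors v ∈ H and w ∈ K (essentially bounded functions). Let E = supp(v) and F = supp(w). If λ(E \ F) > 0, then the range of Θ_v is not contained in the range of Θ_w in ℓ²(G). In particular, if λ(E Δ F) > 0 the ranges differ. -/
open MeasureTheory ComplexConjugate Filter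

lemma stmt8_key {G X : Type*} [MeasurableSpace X]
    (μ : Measure X) [IsProbabilityMeasure μ]
    (χ : G → X → ℂ)
    (hmeas : ∀ g, Measurable (χ g))
    (hunit : ∀ g x, ‖χ g x‖ = 1)
    (hcomp : ∀ f : X → ℂ, MemLp f 2 μ →
      (∀ g : G, ∫ x, f x * conj (χ g x) ∂μ = 0) → f =ᵐ[μ] 0)
    (E₀ F₀ : Set X)
    (v w : X → ℂ) (hvm : AEStronglyMeasurable v μ) (hwm : AEStronglyMeasurable w μ)
    (hvsupp : ∀ᵐ t ∂μ, t ∉ E₀ → v t = 0)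
    (hvB : ∃ C : ℝ, ∀ᵐ t ∂μ, ‖v t‖ ≤ C) (hwB : ∃ C : ℝ, ∀ᵐ t ∂μ, ‖w t‖ ≤ C)
    (hpos : 0 < μ ({t | v t ≠ 0} \ {t | w t ≠ 0})) :
    ¬ ({a : G → ℂ | ∃ h : X → ℂ, MemLp h 2 μ ∧ (∀ᵐ t ∂μ, t ∉ E₀ → h t = 0) ∧
          a = fun g => ∫ t, h t * conj (χ g t * v t) ∂μ} ⊆
        {a : G → ℂ | ∃ h : X → ℂ, MemLp h 2 μ ∧ (∀ᵐ t ∂μ, t ∉ F₀ → h t = 0) ∧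
          a = fun g => ∫ t, h t * conj (χ g t * w t) ∂μ}) := by
  intro hsub
  obtain ⟨Cv, hCv⟩ := hvB
  obtain ⟨Cw, hCw⟩ := hwB
  set v' : X → ℂ := hvm.mk v with hv'def
  set w' : X → ℂ := hwm.mk w with hw'def
  have hv' : v =ᵐ[μ] v' := hvm.ae_eq_mk
  have hw' : w =ᵐ[μ] w' := hwm.ae_eq_mk
  have hv'meas : Measurable v' := hvm.stronglyMeasurable_mk.measurable
  have hw'meas : Measurable w' := hwm.stronglyMeasurable_mk.measurable
  set S : Set X := {t | v' t ≠ 0} \ {t | w' t ≠ 0} with hSdef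
  have hSmeas : MeasurableSet S :=
    ((hv'meas (measurableSet_singleton 0)).compl).diff
      ((hw'meas (measurableSet_singleton 0)).compl)
  have hSeq : S =ᵐ[μ] ({t | v t ≠ 0} \ {t | w t ≠ 0}) := by
    apply Filter.eventuallyEq_set.mpr
    filter_upwards [hv', hw'] with t h1 h2
    show t ∈ S ↔ t ∈ ({t | v t ≠ 0} \ {t | w t ≠ 0})
    rw [hSdef]
    simp only [Set.mem_diff, Set.mem_setOf_eq, h1, h2]
  have hSpos : 0 < μ S := by rw [measure_congr hSeq]; exact hpos
  set h : X → ℂ := S.indicator (fun t => conj (v' t)) with hhdef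
  have hhmeas : Measurable h :=
    (Complex.continuous_conj.measurable.comp hv'meas).indicator hSmeas
  have hCv' : ∀ᵐ t ∂μ, ‖v' t‖ ≤ Cv := by
    filter_upwards [hCv, hv'] with t h1 h2; rw [← h2]; exact h1
  have hhbd : ∀ᵐ t ∂μ, ‖h t‖ ≤ Cv := by
    filter_upwards [hCv'] with t h1
    refine le_trans ?_ (le_trans (by simp : ‖conj (v' t)‖ ≤ ‖v' t‖) h1)
    exact norm_indicator_le_norm_self _ t
  have hhmem : MemLp h 2 μ := MemLp.of_bound hhmeas.aestronglyMeasurable Cv hhbd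
  have hhsupp : ∀ᵐ t ∂μ, t ∉ E₀ → h t = 0 := by
    filter_upwards [hvsupp, hv'] with t h1 h2 ht
    by_cases hts : t ∈ S
    · have : v' t = 0 := by rw [← h2]; exact h1 ht
      simp [hhdef, Set.indicator_of_mem hts, this]
    · simp [hhdef, Set.indicator_of_notMem hts]
  obtain ⟨h', hh'mem, hh'supp, heq⟩ :=
    hsub ⟨h, hhmem, hhsupp, rfl⟩
  -- f := h * conj v - h' * conj w
  set f : X → ℂ := fun t => h t * conj (v t) - h' t * conj (w t) with hfdef
  have hcvm : AEStronglyMeasurable (fun t => conj (v t)) μ :=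
    Complex.continuous_conj.comp_aestronglyMeasurable hvm
  have hcwm : AEStronglyMeasurable (fun t => conj (w t)) μ :=
    Complex.continuous_conj.comp_aestronglyMeasurable hwm
  have hf1m : AEStronglyMeasurable (fun t => h t * conj (v t)) μ :=
    hhmeas.aestronglyMeasurable.mul hcvm
  have hf2m : AEStronglyMeasurable (fun t => h' t * conj (w t)) μ :=
    hh'mem.aestronglyMeasurable.mul hcwm
  have hf1 : MemLp (fun t => h t * conj (v t)) 2 μ := by
    refine MemLp.of_bound hf1m (Cv * Cv) ?_
    filter_upwards [hhbd, hCv] with t h1 h2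
    rw [norm_mul]
    have h0 : (0:ℝ) ≤ Cv := le_trans (norm_nonneg _) h2
    exact mul_le_mul h1 (by simpa using h2) (norm_nonneg _) h0
  have hf2 : MemLp (fun t => h' t * conj (w t)) 2 μ := by
    refine MemLp.of_le_mul (c := Cw) hh'mem hf2m ?_
    filter_upwards [hCw] with t h1
    rw [norm_mul, mul_comm]
    exact mul_le_mul_of_nonneg_right (by simpa using h1) (norm_nonneg _)
  have hfmem : MemLp f 2 μ := hf1.sub hf2
  have hzero : ∀ g : G, ∫ x, f x * conj (χ g x) ∂μ = 0 := by
    intro g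
    have hcχm : AEStronglyMeasurable (fun t => conj (χ g t)) μ :=
      Complex.continuous_conj.comp_aestronglyMeasurable (hmeas g).aestronglyMeasurable
    have hbd1 : MemLp (fun t => h t * conj (v t) * conj (χ g t)) 2 μ := by
      refine MemLp.of_le_mul (c := 1) hf1 (hf1m.mul hcχm) ?_
      filter_upwards with t
      simp [norm_mul, hunit g t]
    have hbd2 : MemLp (fun t => h' t * conj (w t) * conj (χ g t)) 2 μ := by
      refine MemLp.of_le_mul (c := 1) hf2 (hf2m.mul hcχm) ?_
      filter_upwards with t
      simp [norm_mul, hunit g t]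
    have hint1 : Integrable (fun t => h t * conj (v t) * conj (χ g t)) μ :=
      hbd1.integrable one_le_two
    have hint2 : Integrable (fun t => h' t * conj (w t) * conj (χ g t)) μ :=
      hbd2.integrable one_le_two
    have e1 : ∫ t, h t * conj (v t) * conj (χ g t) ∂μ
        = ∫ t, h t * conj (χ g t * v t) ∂μ := by
      apply integral_congr_ae; filter_upwards with t; simp [map_mul]; ring
    have e2 : ∫ t, h' t * conj (w t) * conj (χ g t) ∂μ
        = ∫ t, h' t * conj (χ g t * w t) ∂μ := by
      apply integral_congr_ae; filter_upwards with t; simp [map_mul]; ring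
    have heqg := congrFun heq g
    calc ∫ x, f x * conj (χ g x) ∂μ
        = ∫ x, (h x * conj (v x) * conj (χ g x) - h' x * conj (w x) * conj (χ g x)) ∂μ := by
          apply integral_congr_ae; filter_upwards with t; simp [hfdef]; ring
      _ = (∫ t, h t * conj (v t) * conj (χ g t) ∂μ)
          - ∫ t, h' t * conj (w t) * conj (χ g t) ∂μ := integral_sub hint1 hint2
      _ = 0 := by rw [e1, e2, ← heqg]; exact sub_self _
  have hfz : f =ᵐ[μ] 0 := hcomp f hfmem hzero
  have hSz : μ S = 0 := by
    rw [measure_eq_zero_iff_ae_notMem]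
    filter_upwards [hfz, hv', hw'] with t h1 h2 h3 hts
    have htv : v' t ≠ 0 := hts.1
    have htw : w' t = 0 := by simpa using hts.2
    have hht : h t = conj (v' t) := Set.indicator_of_mem hts _
    have : conj (v' t) * conj (v' t) = 0 := by
      have := h1
      simp only [hfdef, Pi.zero_apply, sub_eq_zero] at this
      rw [hht, h2, h3, htw] at this
      simpa using this
    exact htv (by simpa using mul_self_eq_zero.mp this)
  exact absurd hSz hSpos.ne'


/-- For Bessel vectors `v ∈ L²(E₀)`, `w ∈ L²(F₀)` (essentially bounded
functions) with supports `E = supp v`, `F = supp w`: if `λ(E \ F) > 0` then the range of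
`Θ_v` is not contained in the range of `Θ_w`; in particular if `λ(E Δ F) > 0` the ranges
differ. -/
theorem stmt8 {G X : Type*} [CommGroup G] [Countable G] [DecidableEq G] [MeasurableSpace X]
    (μ : Measure X) [IsProbabilityMeasure μ]
    (χ : G → X → ℂ)
    (hmeas : ∀ g, Measurable (χ g))
    (hunit : ∀ g x, ‖χ g x‖ = 1)
    (hhom : ∀ g g' x, χ (g * g') x = χ g x * χ g' x)
    (horth : ∀ g g' : G, ∫ x, χ g x * conj (χ g' x) ∂μ = if g = g' then (1 : ℂ) else 0)
    (hcomp : ∀ f : X → ℂ, MemLp f 2 μ →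
      (∀ g : G, ∫ x, f x * conj (χ g x) ∂μ = 0) → f =ᵐ[μ] 0)
    (E₀ F₀ : Set X) (hE₀ : MeasurableSet E₀) (hF₀ : MeasurableSet F₀)
    (v w : X → ℂ) (hv : MemLp v 2 μ) (hw : MemLp w 2 μ)
    (hvsupp : ∀ᵐ t ∂μ, t ∉ E₀ → v t = 0) (hwsupp : ∀ᵐ t ∂μ, t ∉ F₀ → w t = 0)
    -- v and w are Bessel vectors: essentially bounded
    (hvB : ∃ C : ℝ, ∀ᵐ t ∂μ, ‖v t‖ ≤ C) (hwB : ∃ C : ℝ, ∀ᵐ t ∂μ, ‖w t‖ ≤ C) :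
    (0 < μ ({t | v t ≠ 0} \ {t | w t ≠ 0}) →
      ¬ ({a : G → ℂ | ∃ h : X → ℂ, MemLp h 2 μ ∧ (∀ᵐ t ∂μ, t ∉ E₀ → h t = 0) ∧
            a = fun g => ∫ t, h t * conj (χ g t * v t) ∂μ} ⊆
          {a : G → ℂ | ∃ h : X → ℂ, MemLp h 2 μ ∧ (∀ᵐ t ∂μ, t ∉ F₀ → h t = 0) ∧
            a = fun g => ∫ t, h t * conj (χ g t * w t) ∂μ}))
    ∧
    (0 < μ (symmDiff {t | v t ≠ 0} {t | w t ≠ 0}) →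
      {a : G → ℂ | ∃ h : X → ℂ, MemLp h 2 μ ∧ (∀ᵐ t ∂μ, t ∉ E₀ → h t = 0) ∧
          a = fun g => ∫ t, h t * conj (χ g t * v t) ∂μ} ≠
        {a : G → ℂ | ∃ h : X → ℂ, MemLp h 2 μ ∧ (∀ᵐ t ∂μ, t ∉ F₀ → h t = 0) ∧
          a = fun g => ∫ t, h t * conj (χ g t * w t) ∂μ}) := by
  constructor
  · intro hpos
    exact stmt8_key μ χ hmeas hunit hcomp E₀ F₀ v w hv.aestronglyMeasurable
      hw.aestronglyMeasurable hvsupp hvB hwB hpos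
  · intro hpos heq
    have hsplit : 0 < μ ({t | v t ≠ 0} \ {t | w t ≠ 0}) ∨ 0 < μ ({t | w t ≠ 0} \ {t | v t ≠ 0}) := by
      by_contra hc
      push_neg at hc
      obtain ⟨hc1, hc2⟩ := hc
      have h1 : μ ({t | v t ≠ 0} \ {t | w t ≠ 0}) = 0 := le_antisymm hc1 zero_le
      have h2 : μ ({t | w t ≠ 0} \ {t | v t ≠ 0}) = 0 := le_antisymm hc2 zero_le
      have : μ (symmDiff {t | v t ≠ 0} {t | w t ≠ 0}) = 0 := by
        rw [Set.symmDiff_def]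
        exact measure_union_null h1 h2
      exact absurd this hpos.ne'
    rcases hsplit with hp | hp
    · exact stmt8_key μ χ hmeas hunit hcomp E₀ F₀ v w hv.aestronglyMeasurable
        hw.aestronglyMeasurable hvsupp hvB hwB hp (heq ▸ Set.Subset.refl _)
    · exact stmt8_key μ χ hmeas hunit hcomp F₀ E₀ w v hw.aestronglyMeasurable
        hv.aestronglyMeasurable hwsupp hwB hvB hp (heq ▸ Set.Subset.refl _)
end

section
/- Let G be a countable discrete abelian group acting by multiplication by characters on H = L²(E₀) and K = L²(F₀), with Bessel vectors v ∈ H and w ∈ K. If the essential supports of v and w are disjoint up to λ-null sets, then the ranges of the analysis operators Θ_v(H) and Θ_w(K) are orthogonal in ℓ²(G); equivalently, for all h₁ ∈ H, h₂ ∈ K, Σ_{g∈G} ⟨h₁, π(g)v⟩ · conj(⟨h₂, π(g)w⟩) = 0. -/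
open MeasureTheory ComplexConjugate

/-- For Bessel vectors `v ∈ L²(E₀)` and `w ∈ L²(F₀)` whose essential supports
are disjoint up to `λ`-null sets, the ranges of the analysis operators are orthogonal in
`ℓ²(G)`: for all `h₁ ∈ H`, `h₂ ∈ K`, `Σ_g ⟨h₁, π(g)v⟩ conj ⟨h₂, π(g)w⟩ = 0`. -/
theorem stmt9 {G X : Type*} [CommGroup G] [Countable G] [DecidableEq G] [MeasurableSpace X]
    (μ : Measure X) [IsProbabilityMeasure μ]
    (χ : G → X → ℂ)
    (hmeas : ∀ g, Measurable (χ g))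
    (hunit : ∀ g x, ‖χ g x‖ = 1)
    (hhom : ∀ g g' x, χ (g * g') x = χ g x * χ g' x)
    (horth : ∀ g g' : G, ∫ x, χ g x * conj (χ g' x) ∂μ = if g = g' then (1 : ℂ) else 0)
    (hcomp : ∀ f : X → ℂ, MemLp f 2 μ →
      (∀ g : G, ∫ x, f x * conj (χ g x) ∂μ = 0) → f =ᵐ[μ] 0)
    (E₀ F₀ : Set X) (hE₀ : MeasurableSet E₀) (hF₀ : MeasurableSet F₀)
    (v w : X → ℂ) (hv : MemLp v 2 μ) (hw : MemLp w 2 μ)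
    (hvsupp : ∀ᵐ t ∂μ, t ∉ E₀ → v t = 0) (hwsupp : ∀ᵐ t ∂μ, t ∉ F₀ → w t = 0)
    -- v and w are Bessel vectors: essentially bounded
    (hvB : ∃ C : ℝ, ∀ᵐ t ∂μ, ‖v t‖ ≤ C) (hwB : ∃ C : ℝ, ∀ᵐ t ∂μ, ‖w t‖ ≤ C)
    -- the essential supports are disjoint up to null sets
    (hdisj : μ ({t | v t ≠ 0} ∩ {t | w t ≠ 0}) = 0) :
    ∀ h₁ h₂ : X → ℂ, MemLp h₁ 2 μ → MemLp h₂ 2 μ →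
      (∀ᵐ t ∂μ, t ∉ E₀ → h₁ t = 0) → (∀ᵐ t ∂μ, t ∉ F₀ → h₂ t = 0) →
      ∑' g : G, (∫ t, h₁ t * conj (χ g t * v t) ∂μ) *
        conj (∫ t, h₂ t * conj (χ g t * w t) ∂μ) = 0 := by
  intro h₁ h₂ hh₁ hh₂ _ _
  -- the characters as elements of L²
  have hχ : ∀ g, MemLp (χ g) 2 μ := fun g =>
    MemLp.of_bound (hmeas g).aestronglyMeasurable 1
      (Filter.Eventually.of_forall fun x => (hunit g x).le)
  set e : G → Lp ℂ 2 μ := fun g => (hχ g).toLp (χ g) with he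
  -- the products h₁ · conj v and h₂ · conj w are in L²
  set f₁ : X → ℂ := fun t => h₁ t * conj (v t) with hf₁def
  set f₂ : X → ℂ := fun t => h₂ t * conj (w t) with hf₂def
  have hm₁ : AEStronglyMeasurable f₁ μ :=
    hh₁.aestronglyMeasurable.mul (RCLike.continuous_conj.comp_aestronglyMeasurable
      hv.aestronglyMeasurable)
  have hm₂ : AEStronglyMeasurable f₂ μ :=
    hh₂.aestronglyMeasurable.mul (RCLike.continuous_conj.comp_aestronglyMeasurable
      hw.aestronglyMeasurable)
  obtain ⟨Cv, hCv⟩ := hvB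
  obtain ⟨Cw, hCw⟩ := hwB
  have hf₁ : MemLp f₁ 2 μ := by
    refine MemLp.of_le_mul (c := Cv) hh₁ hm₁ ?_
    filter_upwards [hCv] with t ht
    calc ‖f₁ t‖ = ‖v t‖ * ‖h₁ t‖ := by
          simp [hf₁def, norm_mul, mul_comm]
      _ ≤ Cv * ‖h₁ t‖ := by
          exact mul_le_mul_of_nonneg_right ht (norm_nonneg _)
  have hf₂ : MemLp f₂ 2 μ := by
    refine MemLp.of_le_mul (c := Cw) hh₂ hm₂ ?_
    filter_upwards [hCw] with t ht
    calc ‖f₂ t‖ = ‖w t‖ * ‖h₂ t‖ := by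
          simp [hf₂def, norm_mul, mul_comm]
      _ ≤ Cw * ‖h₂ t‖ := by
          exact mul_le_mul_of_nonneg_right ht (norm_nonneg _)
  set F₁ : Lp ℂ 2 μ := hf₁.toLp f₁ with hF₁
  set F₂ : Lp ℂ 2 μ := hf₂.toLp f₂ with hF₂
  -- a formula for inner products with coercions
  have hinner : ∀ (a b : X → ℂ) (ha : MemLp a 2 μ) (hb : MemLp b 2 μ),
      (inner ℂ (ha.toLp a) (hb.toLp b) : ℂ) = ∫ x, conj (a x) * b x ∂μ := by
    intro a b ha hb
    rw [MeasureTheory.L2.inner_def]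
    refine integral_congr_ae ?_
    filter_upwards [ha.coeFn_toLp, hb.coeFn_toLp] with x hx₁ hx₂
    simp [hx₁, hx₂, RCLike.inner_apply, mul_comm]
  -- orthonormality of the characters in L²
  have honb : Orthonormal ℂ e := by
    rw [orthonormal_iff_ite]
    intro g g'
    rw [he]
    rw [hinner _ _ (hχ g) (hχ g')]
    have : ∫ x, conj (χ g x) * χ g' x ∂μ = ∫ x, χ g' x * conj (χ g x) ∂μ :=
      integral_congr_ae (Filter.Eventually.of_forall fun x => mul_comm _ _)
    rw [this, horth g' g]
    simp [eq_comm]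
  -- completeness: orthogonal complement of the span is trivial
  have hbot : (Submodule.span ℂ (Set.range e))ᗮ = ⊥ := by
    rw [Submodule.eq_bot_iff]
    intro f hf
    have hzero : ∀ g : G, (inner ℂ (e g) f : ℂ) = 0 := fun g =>
      (Submodule.mem_orthogonal _ f).1 hf (e g)
        (Submodule.subset_span ⟨g, rfl⟩)
    have hae : (f : X → ℂ) =ᵐ[μ] 0 := by
      refine hcomp f (Lp.memLp f) fun g => ?_
      have h1 : (inner ℂ (e g) f : ℂ) = ∫ x, conj (χ g x) * f x ∂μ := by
        rw [MeasureTheory.L2.inner_def]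
        refine integral_congr_ae ?_
        filter_upwards [(hχ g).coeFn_toLp] with x hx
        simp [he, hx, RCLike.inner_apply, mul_comm]
      have h2 : ∫ x, (f : X → ℂ) x * conj (χ g x) ∂μ = ∫ x, conj (χ g x) * f x ∂μ :=
        integral_congr_ae (Filter.Eventually.of_forall fun x => mul_comm _ _)
      rw [h2, ← h1, hzero g]
    exact Lp.ext (hae.trans (Lp.coeFn_zero ℂ 2 μ).symm)
  -- Hilbert basis and Parseval
  let b : HilbertBasis G ℂ (Lp ℂ 2 μ) := HilbertBasis.mkOfOrthogonalEqBot honb hbot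
  have hb : ⇑b = e := HilbertBasis.coe_mkOfOrthogonalEqBot honb hbot
  have hparseval : ∑' g : G, (inner ℂ F₂ (b g) : ℂ) * inner ℂ (b g) F₁ = inner ℂ F₂ F₁ :=
    b.tsum_inner_mul_inner F₂ F₁
  -- identify the terms
  have hterm : ∀ g : G,
      (∫ t, h₁ t * conj (χ g t * v t) ∂μ) * conj (∫ t, h₂ t * conj (χ g t * w t) ∂μ)
        = (inner ℂ F₂ (b g) : ℂ) * inner ℂ (b g) F₁ := by
    intro g
    have e₁ : (inner ℂ (b g) F₁ : ℂ) = ∫ t, h₁ t * conj (χ g t * v t) ∂μ := by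
      rw [hb, he, hF₁, hinner _ _ (hχ g) hf₁]
      refine integral_congr_ae (Filter.Eventually.of_forall fun t => ?_)
      simp only [hf₁def, map_mul]
      ring
    have e₂ : (inner ℂ F₂ (b g) : ℂ) = conj (∫ t, h₂ t * conj (χ g t * w t) ∂μ) := by
      rw [hb, he, hF₂, hinner _ _ hf₂ (hχ g), ← integral_conj]
      refine integral_congr_ae (Filter.Eventually.of_forall fun t => ?_)
      simp only [hf₂def, map_mul, RingHomCompTriple.comp_apply, RingHom.id_apply]
      ring
    rw [e₁, e₂, mul_comm]
  -- the inner product ⟪F₂, F₁⟫ vanishes by disjointness of supports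
  have hzero : (inner ℂ F₂ F₁ : ℂ) = 0 := by
    rw [hF₂, hF₁, hinner _ _ hf₂ hf₁]
    refine integral_eq_zero_of_ae ?_
    have hdisj' : ∀ᵐ t ∂μ, t ∉ ({t | v t ≠ 0} ∩ {t | w t ≠ 0}) :=
      (ae_iff.2 (by simpa [Set.setOf_and] using hdisj))
    filter_upwards [hdisj'] with t ht
    simp only [Set.mem_inter_iff, Set.mem_setOf_eq, not_and_or, not_not] at ht
    rcases ht with h | h <;>
      simp [hf₁def, hf₂def, h]
  calc ∑' g : G, (∫ t, h₁ t * conj (χ g t * v t) ∂μ) *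
        conj (∫ t, h₂ t * conj (χ g t * w t) ∂μ)
      = ∑' g : G, (inner ℂ F₂ (b g) : ℂ) * inner ℂ (b g) F₁ := tsum_congr hterm
    _ = inner ℂ F₂ F₁ := hparseval
    _ = 0 := hzero
end

section
/- Let E ⊆ ℝ^d have finite measure and let A, B be sampling matrices for bands E, F respectively. Then the orthogonal projections P_A and P_B of ℓ²(ℤ^d) onto the ranges of the sampling transforms Θ_A(V_E) and Θ_B(V_F) commute: P_A P_B = P_B P_A. -/
open MeasureTheory ENNReal Matrix

noncomputable section

abbrev Ed (d : ℕ) := EuclideanSpace ℝ (Fin d)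

def toE {d : ℕ} (v : Fin d → ℝ) : Ed d := WithLp.toLp 2 v

def unitBox (d : ℕ) : Set (Ed d) := {ξ | ∀ i, ξ i ∈ Set.Ico (0 : ℝ) 1}

def periodization {d : ℕ} (E : Set (Ed d)) (A : Matrix (Fin d) (Fin d) ℝ)
    (ξ : Ed d) : ℝ≥0∞ :=
  ∑' k : Fin d → ℤ,
    E.indicator (fun _ => (1 : ℝ≥0∞)) (toE ((Aᵀ)⁻¹.mulVec fun i => ξ i + (k i : ℝ)))

/-- The range of the sampling transform `Θ_A : V_E → ℓ²(ℤ^d)`. -/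
def samplingRange {d : ℕ} (E : Set (Ed d)) (A : Matrix (Fin d) (Fin d) ℝ) :
    Set ((Fin d → ℤ) → ℂ) :=
  {a | ∃ Fh : Ed d → ℂ, MemLp Fh 2 volume ∧ (∀ x ∉ E, Fh x = 0) ∧
    a = fun z => FourierTransformInv.fourierInv Fh (toE (A.mulVec fun i => (z i : ℝ)))}

/-- `ℓ²(ℤ^d)`. -/
abbrev l2Zd (d : ℕ) := lp (fun _ : Fin d → ℤ => ℂ) 2

namespace Stmt13Aux

open scoped FourierTransform RealInnerProductSpace

variable {d : ℕ}

abbrev Gd (d : ℕ) := Fin d → ℤ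

lemma memℓp_shift (w : Gd d) (a : l2Zd d) :
    Memℓp (fun z : Gd d => (a : Gd d → ℂ) (z - w)) 2 := by
  apply memℓp_gen
  have h := (lp.memℓp a).summable (p := 2) (by norm_num)
  exact (Equiv.summable_iff (Equiv.subRight w)).2 h

/-- Shift operator on `ℓ²(ℤ^d)`. -/
def shift (w : Gd d) (a : l2Zd d) : l2Zd d := ⟨fun z => a (z - w), memℓp_shift w a⟩

@[simp] lemma shift_apply (w : Gd d) (a : l2Zd d) (z : Gd d) :
    (shift w a : Gd d → ℂ) z = a (z - w) := rfl

lemma shift_sub (w : Gd d) (a b : l2Zd d) :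
    shift w (a - b) = shift w a - shift w b := by
  apply Subtype.ext
  funext z
  simp only [lp.coeFn_sub, Pi.sub_apply]
  rfl

lemma shift_shift_neg (w : Gd d) (a : l2Zd d) : shift w (shift (-w) a) = a := by
  apply Subtype.ext
  funext z
  simp [shift, sub_neg_eq_add]

lemma inner_shift (w : Gd d) (a b : l2Zd d) :
    (inner ℂ (shift w a) (shift w b) : ℂ) = inner ℂ a b := by
  rw [lp.inner_eq_tsum, lp.inner_eq_tsum]
  exact (Equiv.subRight w).tsum_eq fun u => (inner ℂ (a u) (b u) : ℂ)

lemma single_apply' (u : Gd d) (c : ℂ) (z : Gd d) :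
    (lp.single 2 u c : l2Zd d) z = if z = u then c else 0 := by
  by_cases h : z = u
  · subst h; simp [lp.single_apply_self]
  · simp [lp.single_apply_ne _ _ _ h, h]

/-- The "delta at the origin" of `ℓ²(ℤ^d)`. -/
def delta : l2Zd d := lp.single 2 (0 : Gd d) 1

lemma shift_delta (w : Gd d) : shift w (delta (d := d)) = lp.single 2 w 1 := by
  apply Subtype.ext
  funext z
  rw [shift_apply, single_apply']
  show (lp.single 2 (0 : Gd d) 1 : l2Zd d) (z - w) = _
  rw [single_apply']
  simp [sub_eq_zero]

lemma single_eq_smul_shift_delta (w : Gd d) (c : ℂ) :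
    (lp.single 2 w c : l2Zd d) = c • shift w (delta (d := d)) := by
  rw [shift_delta]
  apply Subtype.ext
  funext z
  rw [lp.coeFn_smul, Pi.smul_apply, single_apply', single_apply']
  by_cases h : z = w <;> simp [h]

/-- Any operator commuting with shifts acts by convolution with `T delta`. -/
lemma apply_eq_tsum (T : l2Zd d →L[ℂ] l2Zd d)
    (hT : ∀ w a, T (shift w a) = shift w (T a)) (a : l2Zd d) (z : Gd d) :
    (T a : Gd d → ℂ) z = ∑' w : Gd d, a w * (T delta : Gd d → ℂ) (z - w) := by
  have h1 : HasSum (fun w : Gd d => (lp.single 2 w (a w) : l2Zd d)) a :=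
    lp.hasSum_single (by norm_num) a
  have h2 : HasSum (fun w : Gd d => T (lp.single 2 w (a w))) (T a) := h1.mapL T
  have h3 := h2.mapL (innerSL ℂ (lp.single 2 z (1 : ℂ) : l2Zd d))
  have key : ∀ f : l2Zd d, (innerSL ℂ (lp.single 2 z (1 : ℂ) : l2Zd d)) f = f z := by
    intro f
    simp only [innerSL_apply_apply, lp.inner_single_left]
    simp
  have hterm : ∀ w : Gd d,
      (innerSL ℂ (lp.single 2 z (1 : ℂ) : l2Zd d)) (T (lp.single 2 w (a w)))
        = a w * (T delta : Gd d → ℂ) (z - w) := by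
    intro w
    rw [key, single_eq_smul_shift_delta, _root_.map_smul, hT]
    rw [lp.coeFn_smul, Pi.smul_apply, smul_eq_mul, shift_apply]
  rw [key] at h3
  simp only [hterm] at h3
  exact h3.tsum_eq.symm

/-- Two operators commuting with all shifts commute with each other. -/
lemma comm_of_shiftComm (T S : l2Zd d →L[ℂ] l2Zd d)
    (hT : ∀ w a, T (shift w a) = shift w (T a))
    (hS : ∀ w a, S (shift w a) = shift w (S a)) (x : l2Zd d) :
    T (S x) = S (T x) := by
  have hdelta : T (S delta) = S (T delta) := by
    apply Subtype.ext
    funext z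
    rw [apply_eq_tsum T hT (S delta) z, apply_eq_tsum S hS (T delta) z]
    have h := (Equiv.subLeft z).tsum_eq
      (fun w : Gd d => (T delta : Gd d → ℂ) w * (S delta : Gd d → ℂ) (z - w))
    rw [← h]
    refine tsum_congr fun w => ?_
    simp only [Equiv.subLeft_apply, sub_sub_cancel]
    ring
  have hsingle : ∀ (w : Gd d) (c : ℂ),
      T (S (lp.single 2 w c)) = S (T (lp.single 2 w c)) := by
    intro w c
    rw [single_eq_smul_shift_delta, _root_.map_smul, _root_.map_smul, _root_.map_smul,
      _root_.map_smul, hS w delta, hT w (S delta), hT w delta, hS w (T delta), hdelta]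
  have h1 : HasSum (fun w : Gd d => (lp.single 2 w (x w) : l2Zd d)) x :=
    lp.hasSum_single (by norm_num) x
  have h2 : HasSum (fun w : Gd d => T (S (lp.single 2 w (x w)))) (T (S x)) :=
    (h1.mapL S).mapL T
  have h3 : HasSum (fun w : Gd d => S (T (lp.single 2 w (x w)))) (S (T x)) :=
    (h1.mapL T).mapL S
  have he : (fun w : Gd d => T (S (lp.single 2 w (x w))))
      = fun w : Gd d => S (T (lp.single 2 w (x w))) :=
    funext fun w => hsingle w (x w)
  rw [he] at h2
  exact h2.unique h3

/-- Uniqueness of the orthogonal projection of a point. -/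
lemma proj_unique {x p q : l2Zd d}
    (h1 : (inner ℂ (x - p) p : ℂ) = 0) (h2 : (inner ℂ (x - p) q : ℂ) = 0)
    (h3 : (inner ℂ (x - q) p : ℂ) = 0) (h4 : (inner ℂ (x - q) q : ℂ) = 0) : p = q := by
  have e : p - q = (x - q) - (x - p) := by abel
  have : (inner ℂ (p - q) (p - q) : ℂ) = 0 := by
    nth_rewrite 1 [e]
    rw [inner_sub_left, inner_sub_right, inner_sub_right, h1, h2, h3, h4]
    ring
  rw [inner_self_eq_zero, sub_eq_zero] at this
  exact this

/-- A projection onto a shift-invariant set commutes with shifts. -/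
lemma proj_shift_comm (M : Set (Gd d → ℂ))
    (hM : ∀ a ∈ M, ∀ w : Gd d, (fun z => a (z - w)) ∈ M)
    (P : l2Zd d →L[ℂ] l2Zd d)
    (hP : ∀ x : l2Zd d, ((P x : Gd d → ℂ) ∈ M) ∧
      ∀ y : l2Zd d, ((y : Gd d → ℂ) ∈ M) → (inner ℂ (x - P x) y : ℂ) = 0)
    (w : Gd d) (x : l2Zd d) : P (shift w x) = shift w (P x) := by
  set p := P (shift w x) with hp
  set q := shift w (P x) with hq
  have hq1 : (q : Gd d → ℂ) ∈ M := hM _ (hP x).1 w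
  have hq2 : ∀ y : l2Zd d, ((y : Gd d → ℂ) ∈ M) →
      (inner ℂ (shift w x - q) y : ℂ) = 0 := by
    intro y hy
    have e1 : shift w x - q = shift w (x - P x) := (shift_sub w x (P x)).symm
    have e2 : y = shift w (shift (-w) y) := (shift_shift_neg w y).symm
    rw [e1, e2, inner_shift]
    exact (hP x).2 _ (hM _ hy (-w))
  exact proj_unique ((hP (shift w x)).2 p (hP (shift w x)).1)
    ((hP (shift w x)).2 q hq1) (hq2 p (hP (shift w x)).1) (hq2 q hq1)

/-- The sampling range is shift-invariant. -/
lemma samplingRange_shift {E : Set (Ed d)} {A : Matrix (Fin d) (Fin d) ℝ}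
    {a : (Fin d → ℤ) → ℂ} (ha : a ∈ samplingRange E A) (w : Fin d → ℤ) :
    (fun z => a (z - w)) ∈ samplingRange E A := by
  obtain ⟨Fh, hmem, hsupp, rfl⟩ := ha
  set v₀ : Ed d := toE (A.mulVec fun i => (w i : ℝ)) with hv₀
  refine ⟨fun ξ => Real.fourierChar (-(inner ℝ ξ v₀ : ℝ)) • Fh ξ, ?_, ?_, ?_⟩
  · refine MemLp.of_le hmem ?_ (Filter.Eventually.of_forall fun ξ => ?_)
    · exact ((Real.continuous_fourierChar.comp
        ((continuous_id.inner continuous_const).neg)).aestronglyMeasurable).smul hmem.1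
    · rw [Circle.norm_smul]
  · intro x hx
    simp only [hsupp x hx, smul_zero]
  · funext z
    have harg : (fun i => ((z - w : Fin d → ℤ) i : ℝ))
        = (fun i => (z i : ℝ)) - fun i => (w i : ℝ) := by
      funext i
      simp [Pi.sub_apply]
    have hmv : toE (A.mulVec fun i => ((z - w : Fin d → ℤ) i : ℝ))
        = toE (A.mulVec fun i => (z i : ℝ)) - v₀ := by
      rw [harg, Matrix.mulVec_sub]
      rfl
    show FourierTransformInv.fourierInv Fh (toE (A.mulVec fun i => ((z - w : Fin d → ℤ) i : ℝ))) = _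
    rw [hmv, Real.fourierInv_eq, Real.fourierInv_eq]
    refine integral_congr_ae (Filter.Eventually.of_forall fun ξ => ?_)
    dsimp only
    rw [inner_sub_right, sub_eq_add_neg, AddChar.map_add_eq_mul, mul_smul]

end Stmt13Aux

open Stmt13Aux

/-- If `A`, `B` are sampling matrices for the bands `E`, `F`, then the
orthogonal projections `P_A`, `P_B` of `ℓ²(ℤ^d)` onto the ranges of the sampling transforms
`Θ_A(V_E)`, `Θ_B(V_F)` commute.  (A continuous linear map `P` is the orthogonal projection
onto the range iff `P x` lies in the range and `x - P x` is orthogonal to the range, for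
every `x`.) -/
theorem stmt13 {d : ℕ} (E F : Set (Ed d)) (hE : MeasurableSet E) (hF : MeasurableSet F)
    (hEfin : volume E < ⊤) (hFfin : volume F < ⊤)
    (A B : Matrix (Fin d) (Fin d) ℝ) (hA : IsUnit A.det) (hB : IsUnit B.det)
    -- A and B are sampling matrices for E and F
    (hAsamp : ∀ᵐ ξ ∂(volume.restrict (unitBox d)), periodization E A ξ ≤ 1)
    (hBsamp : ∀ᵐ ξ ∂(volume.restrict (unitBox d)), periodization F B ξ ≤ 1)
    (PA PB : l2Zd d →L[ℂ] l2Zd d)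
    -- PA is the orthogonal projection onto Θ_A(V_E)
    (hPA : ∀ x : l2Zd d, ((PA x : ∀ _ : Fin d → ℤ, ℂ) ∈ samplingRange E A) ∧
      ∀ y : l2Zd d, ((y : ∀ _ : Fin d → ℤ, ℂ) ∈ samplingRange E A) →
        (inner ℂ (x - PA x) y : ℂ) = 0)
    -- PB is the orthogonal projection onto Θ_B(V_F)
    (hPB : ∀ x : l2Zd d, ((PB x : ∀ _ : Fin d → ℤ, ℂ) ∈ samplingRange F B) ∧
      ∀ y : l2Zd d, ((y : ∀ _ : Fin d → ℤ, ℂ) ∈ samplingRange F B) →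
        (inner ℂ (x - PB x) y : ℂ) = 0) :
    PA.comp PB = PB.comp PA := by
  apply ContinuousLinearMap.ext
  intro x
  simp only [ContinuousLinearMap.comp_apply]
  exact comm_of_shiftComm PA PB
    (fun w a => proj_shift_comm _ (fun a ha w => samplingRange_shift ha w) PA hPA w a)
    (fun w a => proj_shift_comm _ (fun a ha w => samplingRange_shift ha w) PB hPB w a) x

end
end

section
/- Let G, K be countable discrete groups, π^i a unitary representation of G on a Hilbert space H_i and ρ^i a unitary representation of K on H_i, for i = 1, 2. Let ψ₁,…,ψₙ ∈ H₁ and φ₁,…,φₙ ∈ H₂ be such that {ρ¹_k π¹_g ψ_j} and {ρ²_k π²_g φ_j} are frames (indexed by (k,g,j) ∈ K×G×{1,…,n}) for H₁ and H₂. If for each j the Bessel sequences {π¹_g ψ_j}_{g∈G} and {π²_g φ_j}_{g∈G} are strongly disjoint (i.e. Σ_{g∈G} ⟨h₁, π¹_g ψ_j⟩·conj(⟨h₂, π²_g φ_j⟩) = 0 for all h₁ ∈ H₁, h₂ ∈ H₂), then the two frames are strongly disjoint: Σ_{k,g,j} ⟨h₁, ρ¹_k π¹_g ψ_j⟩·conj(⟨h₂,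 ρ²_k π²_g φ_j⟩) = 0 for all h₁ ∈ H₁, h₂ ∈ H₂. -/
open MeasureTheory ComplexConjugate

set_option maxHeartbeats 1000000 in
/-- if `{ρ¹_k π¹_g ψ_j}` and `{ρ²_k π²_g φ_j}` are frames and for each `j`
the Bessel sequences `{π¹_g ψ_j}_{g∈G}` and `{π²_g φ_j}_{g∈G}` are strongly disjoint, then
the two frames are strongly disjoint. -/
theorem stmt16 {G K : Type*} [Group G] [Countable G] [Group K] [Countable K]
    {H₁ H₂ : Type*} [NormedAddCommGroup H₁] [InnerProductSpace ℂ H₁] [CompleteSpace H₁]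
    [NormedAddCommGroup H₂] [InnerProductSpace ℂ H₂] [CompleteSpace H₂]
    (π₁ : G →* (H₁ ≃ₗᵢ[ℂ] H₁)) (π₂ : G →* (H₂ ≃ₗᵢ[ℂ] H₂))
    (ρ₁ : K →* (H₁ ≃ₗᵢ[ℂ] H₁)) (ρ₂ : K →* (H₂ ≃ₗᵢ[ℂ] H₂))
    (n : ℕ) (ψ : Fin n → H₁) (φ : Fin n → H₂)
    -- the two families are frames for H₁ and H₂
    (hframe₁ : ∃ C₁ C₂ : ℝ, 0 < C₁ ∧ C₁ ≤ C₂ ∧ ∀ h : H₁,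
      C₁ * ‖h‖ ^ 2 ≤ ∑' p : K × G × Fin n,
          ‖(inner ℂ h (ρ₁ p.1 (π₁ p.2.1 (ψ p.2.2))) : ℂ)‖ ^ 2 ∧
        ∑' p : K × G × Fin n,
          ‖(inner ℂ h (ρ₁ p.1 (π₁ p.2.1 (ψ p.2.2))) : ℂ)‖ ^ 2 ≤ C₂ * ‖h‖ ^ 2)
    (hframe₂ : ∃ C₁ C₂ : ℝ, 0 < C₁ ∧ C₁ ≤ C₂ ∧ ∀ h : H₂,
      C₁ * ‖h‖ ^ 2 ≤ ∑' p : K × G × Fin n,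
          ‖(inner ℂ h (ρ₂ p.1 (π₂ p.2.1 (φ p.2.2))) : ℂ)‖ ^ 2 ∧
        ∑' p : K × G × Fin n,
          ‖(inner ℂ h (ρ₂ p.1 (π₂ p.2.1 (φ p.2.2))) : ℂ)‖ ^ 2 ≤ C₂ * ‖h‖ ^ 2)
    -- for each j, the Bessel sequences {π¹_g ψ_j} and {π²_g φ_j} are strongly disjoint
    (hdisj : ∀ (j : Fin n) (h₁ : H₁) (h₂ : H₂),
      ∑' g : G, (inner ℂ h₁ (π₁ g (ψ j)) : ℂ) * conj (inner ℂ h₂ (π₂ g (φ j)) : ℂ) = 0) :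
    -- the two frames are strongly disjoint
    ∀ (h₁ : H₁) (h₂ : H₂),
      ∑' p : K × G × Fin n,
        (inner ℂ h₁ (ρ₁ p.1 (π₁ p.2.1 (ψ p.2.2))) : ℂ) *
          conj (inner ℂ h₂ (ρ₂ p.1 (π₂ p.2.1 (φ p.2.2))) : ℂ) = 0 := by
  intro h₁ h₂
  obtain ⟨C₁, C₂, hC₁, _, hfr₁⟩ := hframe₁
  obtain ⟨D₁, D₂, hD₁, _, hfr₂⟩ := hframe₂
  have hsa : Summable (fun p : K × G × Fin n =>
      ‖(inner ℂ h₁ (ρ₁ p.1 (π₁ p.2.1 (ψ p.2.2))) : ℂ)‖ ^ 2) := by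
    by_contra hns
    have hlow := (hfr₁ h₁).1
    rw [tsum_eq_zero_of_not_summable hns] at hlow
    have h0 : h₁ = 0 := by
      by_contra hh
      have : 0 < C₁ * ‖h₁‖ ^ 2 :=
        mul_pos hC₁ (pow_pos (norm_pos_iff.mpr hh) 2)
      linarith
    apply hns
    subst h0
    simp only [inner_zero_left, norm_zero]
    simpa using summable_zero
  have hsb : Summable (fun p : K × G × Fin n =>
      ‖(inner ℂ h₂ (ρ₂ p.1 (π₂ p.2.1 (φ p.2.2))) : ℂ)‖ ^ 2) := by
    by_contra hns
    have hlow := (hfr₂ h₂).1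
    rw [tsum_eq_zero_of_not_summable hns] at hlow
    have h0 : h₂ = 0 := by
      by_contra hh
      have : 0 < D₁ * ‖h₂‖ ^ 2 :=
        mul_pos hD₁ (pow_pos (norm_pos_iff.mpr hh) 2)
      linarith
    apply hns
    subst h0
    simp only [inner_zero_left, norm_zero]
    simpa using summable_zero
  have hf : Summable (fun p : K × G × Fin n =>
      (inner ℂ h₁ (ρ₁ p.1 (π₁ p.2.1 (ψ p.2.2))) : ℂ) *
        conj (inner ℂ h₂ (ρ₂ p.1 (π₂ p.2.1 (φ p.2.2))) : ℂ)) := by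
    apply Summable.of_norm
    apply Summable.of_nonneg_of_le (fun p => norm_nonneg _)
      (fun p => ?_) ((hsa.add hsb).div_const 2)
    set x : ℝ := ‖(inner ℂ h₁ (ρ₁ p.1 (π₁ p.2.1 (ψ p.2.2))) : ℂ)‖
    set y : ℝ := ‖(inner ℂ h₂ (ρ₂ p.1 (π₂ p.2.1 (φ p.2.2))) : ℂ)‖
    have h2 : ‖(inner ℂ h₁ (ρ₁ p.1 (π₁ p.2.1 (ψ p.2.2))) : ℂ) *
        conj (inner ℂ h₂ (ρ₂ p.1 (π₂ p.2.1 (φ p.2.2))) : ℂ)‖ = x * y := by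
      rw [norm_mul, RCLike.norm_conj]
    rw [h2]
    nlinarith [sq_nonneg (x - y), norm_nonneg ((inner ℂ h₁ (ρ₁ p.1 (π₁ p.2.1 (ψ p.2.2))) : ℂ)),
      norm_nonneg ((inner ℂ h₂ (ρ₂ p.1 (π₂ p.2.1 (φ p.2.2))) : ℂ))]
  rw [Summable.tsum_prod' hf hf.prod_factor]
  have hzero : ∀ k : K, (∑' q : G × Fin n,
      (inner ℂ h₁ (ρ₁ k (π₁ q.1 (ψ q.2))) : ℂ) *
        conj (inner ℂ h₂ (ρ₂ k (π₂ q.1 (φ q.2))) : ℂ)) = 0 := by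
    intro k
    have hfk : Summable (fun q : G × Fin n =>
        (inner ℂ h₁ (ρ₁ k (π₁ q.1 (ψ q.2))) : ℂ) *
          conj (inner ℂ h₂ (ρ₂ k (π₂ q.1 (φ q.2))) : ℂ)) := hf.prod_factor k
    have hrw : ∀ q : G × Fin n,
        (inner ℂ h₁ (ρ₁ k (π₁ q.1 (ψ q.2))) : ℂ) *
          conj (inner ℂ h₂ (ρ₂ k (π₂ q.1 (φ q.2))) : ℂ) =
        (inner ℂ ((ρ₁ k).symm h₁) (π₁ q.1 (ψ q.2)) : ℂ) *
          conj (inner ℂ ((ρ₂ k).symm h₂) (π₂ q.1 (φ q.2)) : ℂ) := by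
      intro q
      rw [show (inner ℂ h₁ (ρ₁ k (π₁ q.1 (ψ q.2))) : ℂ) =
          inner ℂ ((ρ₁ k).symm h₁) (π₁ q.1 (ψ q.2)) by
        conv_lhs => rw [show h₁ = ρ₁ k ((ρ₁ k).symm h₁) by simp]
        rw [LinearIsometryEquiv.inner_map_map],
        show (inner ℂ h₂ (ρ₂ k (π₂ q.1 (φ q.2))) : ℂ) =
          inner ℂ ((ρ₂ k).symm h₂) (π₂ q.1 (φ q.2)) by
        conv_lhs => rw [show h₂ = ρ₂ k ((ρ₂ k).symm h₂) by simp]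
        rw [LinearIsometryEquiv.inner_map_map]]
    simp only [hrw] at hfk ⊢
    rw [← (Equiv.prodComm (Fin n) G).tsum_eq]
    simp only [Equiv.prodComm_apply, Prod.fst_swap, Prod.snd_swap]
    have hfk' : Summable (fun q : Fin n × G =>
        (inner ℂ ((ρ₁ k).symm h₁) (π₁ q.2 (ψ q.1)) : ℂ) *
          conj (inner ℂ ((ρ₂ k).symm h₂) (π₂ q.2 (φ q.1)) : ℂ)) :=
      (Equiv.prodComm (Fin n) G).summable_iff.mpr hfk
    rw [Summable.tsum_prod' hfk' hfk'.prod_factor]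
    rw [tsum_fintype]
    apply Finset.sum_eq_zero
    intro j _
    exact hdisj j ((ρ₁ k).symm h₁) ((ρ₂ k).symm h₂)
  simp only [hzero, tsum_zero]
end
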